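/- arXiv:1703.06550 — 6 statements merged into one kernel-verified Lean document; each statement's English description precedes it below -/
import Mathlib

section
/- Let K ⊂ ℂ be a CM number field (a totally imaginary quadratic extension of a totally real field K⁺) with odd class number, and suppose every prime of K⁺ above 2 ramifies in K/K⁺. Let L ⊂ ℂ be a quadratic extension of K that is stable under complex conjugation and unramified at every finite prime of K not lying above 2. Then there exists a unit u of the ring of integers of K such that L = K(√u). -/
open NumberField Module

open NumberField Module
open scoped nonZeroDivisors
open UniqueFactorizationMonoid

theorem count_nf_map {A B : Type*} [CommRing A] [IsDedekindDomain A]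
    [CommRing B] [IsDedekindDomain B] [DecidableEq (Ideal A)] [DecidableEq (Ideal B)]
    [Algebra A B] (f : A →+* B) (hf : Function.Injective f) (hfa : f = algebraMap A B)
    (P : Ideal A) (hP : P.IsMaximal) (hP0 : P ≠ ⊥)
    (Q : Ideal B) (hQ : Q.IsMaximal) (hQ0 : Q ≠ ⊥)
    (hover : Q.comap f = P)
    (I : Ideal A) (hI : I ≠ ⊥) :
    Multiset.count Q (normalizedFactors (I.map f)) =
      Ideal.ramificationIdx' P Q * Multiset.count P (normalizedFactors I) := by
  have hmapne : ∀ J : Ideal A, J ≠ ⊥ → J.map f ≠ ⊥ := by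
    intro J hJ
    obtain ⟨x, hxJ, hx0⟩ := Submodule.exists_mem_ne_zero_of_ne_bot hJ
    intro h
    have : f x ∈ J.map f := Ideal.mem_map_of_mem f hxJ
    rw [h] at this
    exact hx0 (hf (by simpa using this))
  have hPprime : Prime P := Ideal.prime_of_isPrime hP0 hP.isPrime
  have hQprime : Prime Q := Ideal.prime_of_isPrime hQ0 hQ.isPrime
  set n := Multiset.count P (normalizedFactors I) with hn
  -- P ^ n ∣ I, ¬ P ^ (n+1) ∣ I
  have hmult : emultiplicity P I = n := by
    rw [emultiplicity_eq_count_normalizedFactors hPprime.irreducible hI, normalize_eq]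
  have hdvd : P ^ n ∣ I := by
    rw [pow_dvd_iff_le_emultiplicity, hmult]
  have hndvd : ¬ P ^ (n + 1) ∣ I := by
    rw [pow_dvd_iff_le_emultiplicity, hmult]
    exact_mod_cast by exact_mod_cast Nat.not_succ_le_self n
  obtain ⟨J, hJ⟩ := hdvd
  have hJ0 : J ≠ ⊥ := by rintro rfl; exact hI (by simpa using hJ)
  have hPJ : ¬ P ∣ J := by
    intro ⟨J', hJ'⟩
    exact hndvd ⟨J', by rw [hJ, hJ', pow_succ, mul_assoc]⟩
  have hmap : I.map f = (P.map f) ^ n * J.map f := by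
    rw [hJ, Ideal.map_mul, Ideal.map_pow]
  have hPmap0 : P.map f ≠ ⊥ := hmapne P hP0
  have hJmap0 : J.map f ≠ ⊥ := hmapne J hJ0
  rw [hmap, normalizedFactors_mul (pow_ne_zero _ hPmap0) hJmap0, normalizedFactors_pow,
    Multiset.count_add, Multiset.count_nsmul]
  have h1 : Multiset.count Q (normalizedFactors (P.map f)) = Ideal.ramificationIdx' P Q := by
    subst hfa; convert (Ideal.IsDedekindDomain.ramificationIdx'_eq_normalizedFactors_count hPmap0 hQ.isPrime hQ0).symm
  have h2 : Multiset.count Q (normalizedFactors (J.map f)) = 0 := by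
    rw [Multiset.count_eq_zero]
    intro hQmem
    have : J.map f ≤ Q := Ideal.le_of_dvd (dvd_of_mem_normalizedFactors hQmem)
    have : J ≤ P := hover ▸ (Ideal.map_le_iff_le_comap.mp this)
    exact hPJ (Ideal.dvd_iff_le.mpr this)
  rw [h1, h2, add_zero, mul_comm]

theorem multiset_even_halve {α : Type*} [DecidableEq α] (M : Multiset α)
    (h : ∀ a, Even (M.count a)) : ∃ S : Multiset α, M = S + S := by
  refine ⟨M.toFinset.sum fun a => (M.count a / 2) • {a}, ?_⟩
  ext b
  rw [Multiset.count_add]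
  have hc : ∀ (T : Multiset α), Multiset.count b (M.toFinset.sum fun a => (M.count a / 2) • ({a} : Multiset α)) = if b ∈ M.toFinset then M.count b / 2 else 0 := by
    intro _
    rw [Multiset.count_sum']
    rw [Finset.sum_congr rfl (fun a _ => by
      rw [Multiset.count_nsmul, Multiset.count_singleton])]
    simp [Finset.sum_ite_eq']
  rw [hc M]
  by_cases hb : b ∈ M.toFinset
  · simp only [hb, if_true]
    obtain ⟨k, hk⟩ := h b
    omega
  · simp only [hb, if_false]
    have : M.count b = 0 := by
      rw [Multiset.count_eq_zero]
      intro hmem; exact hb (Multiset.mem_toFinset.mpr hmem)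
    omega

theorem exists_unit_mul_sq {R : Type*} [CommRing R] [IsDedekindDomain R]
    [Fintype (ClassGroup R)] [DecidableEq (Ideal R)]
    (hodd : Odd (Fintype.card (ClassGroup R))) (x : R) (hx : x ≠ 0)
    (heven : ∀ P : Ideal R, P.IsMaximal → P ≠ ⊥ →
      Even (Multiset.count P (normalizedFactors (Ideal.span {x})))) :
    ∃ (u : Rˣ) (γ : R), x = u * γ ^ 2 := by
  classical
  have hspan0 : Ideal.span ({x} : Set R) ≠ ⊥ := by
    simpa [Ideal.span_singleton_eq_bot] using hx
  set M := normalizedFactors (Ideal.span ({x} : Set R)) with hM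
  have heven' : ∀ P : Ideal R, Even (M.count P) := by
    intro P
    by_cases hPM : P ∈ M
    · have hprime : Prime P := prime_of_normalized_factor P hPM
      exact heven P (Ideal.IsPrime.isMaximal (Ideal.isPrime_of_prime hprime) hprime.ne_zero)
        hprime.ne_zero
    · simp [Multiset.count_eq_zero.mpr hPM]
  obtain ⟨S, hMS⟩ := multiset_even_halve M heven'
  set I := S.prod with hI
  have hprod : I * I = Ideal.span {x} := by
    rw [hI, ← Multiset.prod_add, ← hMS, hM, prod_normalizedFactors_eq_self hspan0]
  have hI0 : I ≠ ⊥ := by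
    intro h
    rw [h] at hprod
    rw [Submodule.bot_mul] at hprod
    exact hspan0 hprod.symm
  -- class group argument
  have hInz : I ∈ (Ideal R)⁰ := mem_nonZeroDivisors_iff_ne_zero.mpr hI0
  set g := ClassGroup.mk0 (⟨I, hInz⟩ : (Ideal R)⁰) with hg
  have hg2 : g ^ 2 = 1 := by
    rw [hg, ← map_pow, ClassGroup.mk0_eq_one_iff]
    have : ((⟨I, hInz⟩ : (Ideal R)⁰) ^ 2 : (Ideal R)⁰) = ⟨I * I, mul_mem hInz hInz⟩ := by
      ext; simp [pow_two]
    rw [this]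
    show Submodule.IsPrincipal (I * I)
    rw [hprod]
    exact ⟨x, rfl⟩
  have hord : orderOf g ∣ 2 := orderOf_dvd_of_pow_eq_one hg2
  have hordcard : orderOf g ∣ Fintype.card (ClassGroup R) := orderOf_dvd_card
  have hgone : g = 1 := by
    have h1 : orderOf g = 1 := by
      rcases hodd with ⟨k, hk⟩
      rcases (Nat.dvd_prime Nat.prime_two).mp hord with h | h
      · exact h
      · exfalso
        rcases hordcard with ⟨m, hm⟩
        rw [h] at hm
        omega
    exact orderOf_eq_one_iff.mp h1
  have hIprin : Submodule.IsPrincipal I := by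
    rw [hg, ClassGroup.mk0_eq_one_iff] at hgone
    exact hgone
  obtain ⟨γ, hγ⟩ := hIprin
  have : Ideal.span ({x} : Set R) = Ideal.span ({γ ^ 2} : Set R) := by
    rw [← hprod, hγ, Ideal.submodule_span_eq, Ideal.span_singleton_mul_span_singleton, pow_two]
  obtain ⟨u, hu⟩ := Ideal.span_singleton_eq_span_singleton.mp this
  refine ⟨u⁻¹, γ, ?_⟩
  rw [← hu, show (↑u⁻¹ : R) * (x * ↑u) = x * (↑u * ↑u⁻¹) by ring, Units.mul_inv, mul_one]

-- In a quadratic extension, every element is a K-combination of 1 and α for α ∉ K.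
theorem span_pair_of_quad {K L : Type*} [Field K] [Field L] [Algebra K L]
    (hq : finrank K L = 2) {α : L} (hα : α ∉ (algebraMap K L).range) (y : L) :
    ∃ a b : K, y = algebraMap K L a + algebraMap K L b * α := by
  have hfd : FiniteDimensional K L := by
    have : 0 < finrank K L := by omega
    exact Module.finite_of_finrank_pos this
  have hli : LinearIndependent K ![(1 : L), α] := by
    rw [LinearIndependent.pair_iff]
    intro s t hst
    by_cases ht : t = 0
    · subst ht
      constructor
      · have : algebraMap K L s = 0 := by
          simpa [Algebra.smul_def] using hst
        exact (map_eq_zero _).mp this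
      · rfl
    · exfalso
      apply hα
      refine ⟨-s / t, ?_⟩
      have hs : algebraMap K L s + algebraMap K L t * α = 0 := by
        simpa [Algebra.smul_def] using hst
      have ht' : algebraMap K L t ≠ 0 := fun h0 => ht ((map_eq_zero _).mp h0)
      rw [map_div₀, map_neg, div_eq_iff ht']
      linear_combination -hs
  have hspan : Submodule.span K {(1 : L), α} = ⊤ := by
    have hcard : finrank K (Submodule.span K (Set.range ![(1 : L), α])) = 2 := by
      rw [finrank_span_eq_card hli]
      simp
    have hrange : Set.range ![(1 : L), α] = {(1 : L), α} := by
      simp [Matrix.range_cons, Matrix.range_empty]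
      exact Set.pair_comm α 1
    rw [hrange] at hcard
    apply Submodule.eq_top_of_finrank_eq
    rw [hcard, hq]
  have hy : y ∈ Submodule.span K {(1 : L), α} := by rw [hspan]; trivial
  rw [Submodule.mem_span_pair] at hy
  obtain ⟨a, b, hab⟩ := hy
  exact ⟨a, b, by rw [← hab]; simp [Algebra.smul_def]⟩

-- coefficient uniqueness / zero test
theorem coeff_zero_of_quad {K L : Type*} [Field K] [Field L] [Algebra K L]
    {α : L} (hα : α ∉ (algebraMap K L).range) {a b : K}
    (h : algebraMap K L a + algebraMap K L b * α = 0) : a = 0 ∧ b = 0 := by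
  by_cases hb : b = 0
  · subst hb
    simp only [map_zero, zero_mul, add_zero] at h
    exact ⟨(map_eq_zero _).mp h, rfl⟩
  · exfalso
    apply hα
    refine ⟨-a / b, ?_⟩
    have hb' : algebraMap K L b ≠ 0 := fun h0 => hb ((map_eq_zero _).mp h0)
    rw [map_div₀, map_neg, div_eq_iff hb']
    linear_combination -h

theorem exists_not_in_range {K L : Type*} [Field K] [Field L] [Algebra K L]
    (hq : finrank K L = 2) : ∃ α : L, α ∉ (algebraMap K L).range := by
  by_contra h
  push_neg at h
  have hsurj : Function.Surjective (algebraMap K L) := fun y => h y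
  have : finrank K L = 1 := by
    have e : K ≃ₗ[K] L := LinearEquiv.ofBijective (Algebra.linearMap K L)
      ⟨(algebraMap K L).injective, hsurj⟩
    rw [← e.finrank_eq, finrank_self]
  omega

theorem fixed_in_base {Kp K : Type*} [Field Kp] [Field K] [Algebra Kp K]
    (hquad : finrank Kp K = 2) (c : K ≃+* K)
    (hcKp : ∀ x : Kp, c (algebraMap Kp K x) = algebraMap Kp K x)
    (hcne : ∃ x₀ : K, c x₀ ≠ x₀) {x : K} (hx : c x = x) :
    x ∈ (algebraMap Kp K).range := by
  by_contra hxr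
  obtain ⟨x₀, hx₀⟩ := hcne
  apply hx₀
  obtain ⟨a, b, hab⟩ := span_pair_of_quad hquad hxr x₀
  rw [hab, map_add, map_mul, hcKp, hcKp, hx]

theorem exists_sqrt_of_quad {K L : Type*} [Field K] [Field L] [Algebra K L] [CharZero K]
    (hq : finrank K L = 2) :
    ∃ (β : L) (δ : K), β ∉ (algebraMap K L).range ∧ β ^ 2 = algebraMap K L δ := by
  obtain ⟨α, hα⟩ := exists_not_in_range hq
  obtain ⟨a, b, hab⟩ := span_pair_of_quad hq hα (α ^ 2)
  refine ⟨α - algebraMap K L (b / 2), a + (b / 2) ^ 2, ?_, ?_⟩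
  · intro ⟨r, hr⟩
    exact hα ⟨r + b / 2, by rw [map_add, hr]; ring⟩
  · rw [map_add, map_pow]
    set bb := algebraMap K L (b / 2) with hbb
    set B := algebraMap K L b with hB
    set A := algebraMap K L a with hA
    have h2 : bb * 2 = B := by
      rw [hbb, hB, show ((2 : L) = algebraMap K L 2) by rw [map_ofNat], ← map_mul]
      norm_num
    show (α - bb) ^ 2 = A + bb ^ 2
    linear_combination hab - α * h2


set_option maxHeartbeats 1000000 in
/-- For a CM field `K` (totally imaginary quadratic extension of a totally real
field `K⁺`) with odd class number in which every prime of `K⁺` above `2` ramifies,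
any quadratic extension `L/K` inside `ℂ` that is stable under complex conjugation
and unramified outside `2` is obtained by adjoining the square root of a unit. -/
theorem quadratic_ext_of_CM_is_sqrt_of_unit
    (Kp K L : Type*) [Field Kp] [NumberField Kp] [Field K] [NumberField K]
    [Field L] [NumberField L]
    [Algebra Kp K] [Algebra K L] [Algebra Kp L] [IsScalarTower Kp K L]
    [Algebra Kp ℂ] [Algebra K ℂ] [Algebra L ℂ]
    [IsScalarTower Kp K ℂ] [IsScalarTower K L ℂ]
    (htotreal : ∀ v : NumberField.InfinitePlace Kp, v.IsReal)
    (htotim : ∀ v : NumberField.InfinitePlace K, v.IsComplex)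
    (hquad : Module.finrank Kp K = 2)
    (hKstable : ∃ c : K ≃+* K,
      ∀ x : K, algebraMap K ℂ (c x) = starRingEnd ℂ (algebraMap K ℂ x))
    (hodd : Odd (NumberField.classNumber K))
    (hram2 : ∀ p : Ideal (𝓞 Kp), p.IsMaximal → (2 : 𝓞 Kp) ∈ p →
      ∀ P : Ideal (𝓞 K), P.IsMaximal → P.LiesOver p →
        Ideal.ramificationIdx' p P = 2)
    (hquadL : Module.finrank K L = 2)
    (hLstable : ∃ c : L ≃+* L,
      ∀ x : L, algebraMap L ℂ (c x) = starRingEnd ℂ (algebraMap L ℂ x))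
    (hunramL : ∀ P : Ideal (𝓞 K), P.IsMaximal → (2 : 𝓞 K) ∉ P →
      ∀ Q : Ideal (𝓞 L), Q.IsMaximal → Q.LiesOver P →
        Ideal.ramificationIdx' P Q = 1) :
    ∃ (u : (𝓞 K)ˣ) (β : L),
      β ^ 2 = algebraMap K L (algebraMap (𝓞 K) K (u : 𝓞 K)) ∧
      Algebra.adjoin K {β} = ⊤ := by
  classical
  obtain ⟨C, hC⟩ := hLstable
  obtain ⟨c, hc⟩ := hKstable
  have hKCinj : Function.Injective (algebraMap K ℂ) := (algebraMap K ℂ).injective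
  have hLCinj : Function.Injective (algebraMap L ℂ) := (algebraMap L ℂ).injective
  have hKLinj : Function.Injective (algebraMap K L) := (algebraMap K L).injective
  have hKpKinj : Function.Injective (algebraMap Kp K) := (algebraMap Kp K).injective
  -- C restricts to c on K
  have hCK : ∀ x : K, C (algebraMap K L x) = algebraMap K L (c x) := by
    intro x
    apply hLCinj
    rw [hC, ← IsScalarTower.algebraMap_apply K L ℂ, ← IsScalarTower.algebraMap_apply K L ℂ, hc]
  -- c fixes Kp pointwise
  have hcKp : ∀ x : Kp, c (algebraMap Kp K x) = algebraMap Kp K x := by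
    intro x
    have hreal := htotreal (NumberField.InfinitePlace.mk (algebraMap Kp ℂ))
    rw [NumberField.InfinitePlace.isReal_mk_iff] at hreal
    apply hKCinj
    rw [hc, ← IsScalarTower.algebraMap_apply Kp K ℂ]
    have := RingHom.congr_fun hreal x
    rwa [NumberField.ComplexEmbedding.conjugate_coe_eq] at this
  -- c is not the identity
  have hcne : ∃ x₀ : K, c x₀ ≠ x₀ := by
    have hcpl := htotim (NumberField.InfinitePlace.mk (algebraMap K ℂ))
    rw [NumberField.InfinitePlace.isComplex_mk_iff] at hcpl
    rw [NumberField.ComplexEmbedding.isReal_iff] at hcpl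
    by_contra h
    push_neg at h
    apply hcpl
    ext x
    rw [NumberField.ComplexEmbedding.conjugate_coe_eq, ← hc, h]
  -- involutions
  have hcc : ∀ x : K, c (c x) = x := by
    intro x
    apply hKCinj
    rw [hc, hc, Complex.conj_conj]
  have hCC : ∀ x : L, C (C x) = x := by
    intro x
    apply hLCinj
    rw [hC, hC, Complex.conj_conj]
  -- get a square root generator
  obtain ⟨β, δ, hβr, hβ2⟩ := exists_sqrt_of_quad hquadL
  have hβ0 : β ≠ 0 := fun h => hβr ⟨0, by rw [map_zero, h]⟩
  have hδ0 : δ ≠ 0 := by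
    rintro rfl
    rw [map_zero, pow_eq_zero_iff (by norm_num)] at hβ2
    exact hβ0 hβ2
  -- C β = s β
  have hsq : (C β) ^ 2 = algebraMap K L (c δ) := by
    rw [← map_pow, hβ2, hCK]
  obtain ⟨a, s, hCβ⟩ := span_pair_of_quad hquadL hβr (C β)
  have hexp : algebraMap K L (a ^ 2 + s ^ 2 * δ - c δ) + algebraMap K L (2 * a * s) * β = 0 := by
    have h1 : (algebraMap K L a + algebraMap K L s * β) ^ 2 = algebraMap K L (c δ) := by
      rw [← hCβ]; exact hsq
    simp only [map_add, map_mul, map_sub, map_pow, map_ofNat]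
    linear_combination h1 - (algebraMap K L s) ^ 2 * hβ2
  obtain ⟨hA, hB⟩ := coeff_zero_of_quad hβr hexp
  have has : a = 0 := by
    have h2 : a * s = 0 := by
      have : (2 : K) * (a * s) = 0 := by rw [← mul_assoc]; exact hB
      rcases mul_eq_zero.mp this with h | h
      · exact absurd h two_ne_zero
      · exact h
    rcases mul_eq_zero.mp h2 with h | h
    · exact h
    · exfalso
      apply hβr
      subst h
      simp only [map_zero, zero_mul, add_zero] at hCβ
      refine ⟨c a, ?_⟩
      rw [← hCC β, hCβ, hCK]
  subst has
  simp only [map_zero, zero_add] at hCβ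
  have hceq : s ^ 2 * δ = c δ := by linear_combination hA
  -- norm of s is 1
  have hs1 : c s * s = 1 := by
    apply hKLinj
    rw [map_one]
    have hstep : algebraMap K L (c s * s) * β = β := by
      rw [map_mul]
      conv_rhs => rw [← hCC β, hCβ, map_mul, hCK, hCβ]
      ring
    have := mul_right_cancel₀ hβ0 (hstep.trans (one_mul β).symm)
    exact this
  have hs0 : s ≠ 0 := by
    intro h
    rw [h, mul_zero] at hs1
    exact zero_ne_one hs1
  -- Hilbert 90 by hand : find t with c t = s * t
  have hH90 : ∃ t : K, t ≠ 0 ∧ c t = s * t := by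
    by_cases hs : s = -1
    · obtain ⟨x₀, hx₀⟩ := hcne
      refine ⟨x₀ - c x₀, sub_ne_zero.mpr (Ne.symm hx₀), ?_⟩
      rw [map_sub, hcc, hs]
      ring
    · refine ⟨1 + c s, ?_, ?_⟩
      · intro h
        apply hs
        have h1 : c s = -1 := by linear_combination h
        have h2 := hcc s
        rw [h1, map_neg, map_one] at h2
        exact h2.symm
      · rw [map_add, map_one, hcc, mul_add, mul_comm s (c s), hs1, mul_one, add_comm]
  obtain ⟨t, ht0, hct⟩ := hH90
  -- δ' = δ / t² is fixed by c
  set δ' := δ / t ^ 2 with hδ'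
  have hδ'0 : δ' ≠ 0 := div_ne_zero hδ0 (pow_ne_zero 2 ht0)
  have hδ'fix : c δ' = δ' := by
    rw [hδ', map_div₀, map_pow, hct, ← hceq, mul_pow]
    rw [div_eq_div_iff (mul_ne_zero (pow_ne_zero 2 hs0) (pow_ne_zero 2 ht0))
      (pow_ne_zero 2 ht0)]
    ring
  -- δ' comes from Kp
  obtain ⟨y, hy⟩ := fixed_in_base hquad c hcKp hcne hδ'fix
  have hy0 : y ≠ 0 := by
    rintro rfl
    rw [map_zero] at hy
    exact hδ'0 hy.symm
  -- clear denominators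
  obtain ⟨z, d, hdnz, hzd⟩ := IsFractionRing.div_surjective (A := 𝓞 Kp) y
  have hd0 : (d : 𝓞 Kp) ≠ 0 := nonZeroDivisors.ne_zero hdnz
  have hdK0 : (algebraMap (𝓞 Kp) Kp d) ≠ 0 := by
    simpa using hd0
  have hz0 : z ≠ 0 := by
    rintro rfl
    rw [map_zero, zero_div] at hzd
    exact hy0 hzd.symm
  set w₀ : 𝓞 Kp := z * d with hw₀
  have hw₀0 : w₀ ≠ 0 := mul_ne_zero hz0 hd0
  set e : K := algebraMap Kp K (algebraMap (𝓞 Kp) Kp d) with he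
  have he0 : e ≠ 0 := fun h => hdK0 (hKpKinj (by rw [← he, h, map_zero]))
  -- the key integral element w
  set w : 𝓞 K := algebraMap (𝓞 Kp) (𝓞 K) w₀ with hw
  have hw0 : w ≠ 0 := fun h => hw₀0 (NumberField.RingOfIntegers.algebraMap.injective Kp K (by rw [← hw, h, map_zero]))
  have hwcoe : (algebraMap (𝓞 K) K w) = algebraMap Kp K (algebraMap (𝓞 Kp) Kp w₀) := rfl
  have hzy : (algebraMap (𝓞 Kp) Kp z) = y * algebraMap (𝓞 Kp) Kp d := by
    rw [div_eq_iff hdK0] at hzd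
    exact hzd
  have hwK : (algebraMap (𝓞 K) K w) = δ' * e ^ 2 := by
    rw [hwcoe, hw₀, map_mul, map_mul, hzy, map_mul, hy, he]
    ring
  -- β₂ : the square root of w inside L
  set β₂ : L := β * algebraMap K L (t⁻¹ * e) with hβ₂
  have hte0 : t⁻¹ * e ≠ 0 := mul_ne_zero (inv_ne_zero ht0) he0
  have hβ₂r : β₂ ∉ (algebraMap K L).range := by
    rintro ⟨r, hr⟩
    apply hβr
    have ht' : algebraMap K L t ≠ 0 := fun h0 => ht0 (hKLinj (by rw [h0, map_zero]))
    have he' : algebraMap K L e ≠ 0 := fun h0 => he0 (hKLinj (by rw [h0, map_zero]))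
    refine ⟨r * (t⁻¹ * e)⁻¹, ?_⟩
    rw [map_mul, hr, hβ₂, map_inv₀, map_mul, map_inv₀]
    field_simp
  have hβ₂0 : β₂ ≠ 0 := fun h => hβ₂r (h ▸ ⟨0, by rw [map_zero]⟩)
  have hβ₂2 : β₂ ^ 2 = algebraMap K L (algebraMap (𝓞 K) K w) := by
    rw [hβ₂, mul_pow, hβ2, ← map_pow, ← map_mul, hwK, hδ']
    congr 1
    field_simp
  -- β₂ is integral : element b of 𝓞 L
  have hβ₂int : IsIntegral ℤ β₂ := by
    have h2 : IsIntegral ℤ (β₂ ^ 2) := by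
      rw [hβ₂2]
      have : algebraMap K L (algebraMap (𝓞 K) K w) =
          algebraMap (𝓞 L) L (algebraMap (𝓞 K) (𝓞 L) w) := rfl
      rw [this]
      exact (algebraMap (𝓞 K) (𝓞 L) w).2
    exact IsIntegral.of_pow (by norm_num) h2
  set b : 𝓞 L := ⟨β₂, hβ₂int⟩ with hb
  have hb2 : b ^ 2 = algebraMap (𝓞 K) (𝓞 L) w := by
    apply_fun (algebraMap (𝓞 L) L) using (NumberField.RingOfIntegers.coe_injective)
    rw [map_pow]
    exact hβ₂2
  have hb0 : b ≠ 0 := fun h => hβ₂0 (by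
    have : (algebraMap (𝓞 L) L) b = 0 := by rw [h, map_zero]
    exact this)
  -- evenness of all valuations of w
  have hKpKOinj : Function.Injective (algebraMap (𝓞 Kp) (𝓞 K)) :=
    NumberField.RingOfIntegers.algebraMap.injective Kp K
  have hKLOinj : Function.Injective (algebraMap (𝓞 K) (𝓞 L)) :=
    NumberField.RingOfIntegers.algebraMap.injective K L
  have hspanw0 : Ideal.span ({w} : Set (𝓞 K)) ≠ ⊥ := by
    simpa [Ideal.span_singleton_eq_bot] using hw0
  have heven : ∀ P : Ideal (𝓞 K), P.IsMaximal → P ≠ ⊥ →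
      Even (Multiset.count P (normalizedFactors (Ideal.span {w}))) := by
    intro P hPmax hP0
    by_cases h2P : (2 : 𝓞 K) ∈ P
    · -- primes above 2 : use ramification in K / Kp
      set p : Ideal (𝓞 Kp) := P.comap (algebraMap (𝓞 Kp) (𝓞 K)) with hp
      have hpmax : p.IsMaximal :=
        Ideal.isMaximal_comap_of_isIntegral_of_isMaximal P
      have h2p : (2 : 𝓞 Kp) ∈ p := by
        rw [hp, Ideal.mem_comap, map_ofNat]
        exact h2P
      have hp0 : p ≠ ⊥ := by
        intro h
        rw [h] at h2p
        rw [Ideal.mem_bot] at h2p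
        exact two_ne_zero h2p
      have hliesover : P.LiesOver p := ⟨rfl⟩
      have he2 := hram2 p hpmax h2p P hPmax hliesover
      have hspanmap : Ideal.span ({w} : Set (𝓞 K)) =
          Ideal.map (algebraMap (𝓞 Kp) (𝓞 K)) (Ideal.span {w₀}) := by
        rw [Ideal.map_span, Set.image_singleton, hw]
      have hspanw₀0 : Ideal.span ({w₀} : Set (𝓞 Kp)) ≠ ⊥ := by
        simpa [Ideal.span_singleton_eq_bot] using hw₀0
      rw [hspanmap, count_nf_map (algebraMap (𝓞 Kp) (𝓞 K)) hKpKOinj rfl p hpmax hp0 P hPmax hP0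
        rfl (Ideal.span {w₀}) hspanw₀0, he2]
      exact ⟨_, (two_mul _)⟩
    · -- primes away from 2 : use that L / K is unramified there
      obtain ⟨Q, hQmax, hQcomap⟩ := Ideal.exists_ideal_over_maximal_of_isIntegral
        (R := 𝓞 K) (S := 𝓞 L) P (by rw [NumberField.RingOfIntegers.ker_algebraMap_eq_bot]; exact bot_le)
      have hQ0 : Q ≠ ⊥ := by
        intro h
        rw [h] at hQcomap
        rw [Ideal.comap_bot_of_injective _ hKLOinj] at hQcomap
        exact hP0 hQcomap.symm
      have he1 := hunramL P hPmax h2P Q hQmax ⟨hQcomap.symm⟩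
      have hcount := count_nf_map (algebraMap (𝓞 K) (𝓞 L)) hKLOinj rfl P hPmax hP0 Q hQmax hQ0
        hQcomap (Ideal.span {w}) hspanw0
      rw [he1, one_mul] at hcount
      rw [← hcount]
      have hspanmap : Ideal.map (algebraMap (𝓞 K) (𝓞 L)) (Ideal.span ({w} : Set (𝓞 K))) =
          Ideal.span ({b} : Set (𝓞 L)) ^ 2 := by
        rw [Ideal.map_span, Set.image_singleton, ← hb2, Ideal.span_singleton_pow]
      have hspanb0 : Ideal.span ({b} : Set (𝓞 L)) ≠ ⊥ := by
        simpa [Ideal.span_singleton_eq_bot] using hb0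
      rw [hspanmap, normalizedFactors_pow, Multiset.count_nsmul]
      exact ⟨_, (two_mul _)⟩
  -- odd class number : w = u * γ²
  obtain ⟨u, γ, huγ⟩ := exists_unit_mul_sq (R := 𝓞 K) hodd w hw0 heven
  have hγ0 : γ ≠ 0 := by
    rintro rfl
    rw [zero_pow (by norm_num), mul_zero] at huγ
    exact hw0 huγ
  -- assemble the final generator
  set γK : K := algebraMap (𝓞 K) K γ with hγK
  have hγK0 : γK ≠ 0 := by
    simpa [hγK] using hγ0
  set βf : L := β₂ * algebraMap K L γK⁻¹ with hβf
  have hβfr : βf ∉ (algebraMap K L).range := by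
    rintro ⟨r, hr⟩
    apply hβ₂r
    have hg' : algebraMap K L γK ≠ 0 := fun h0 => hγK0 (hKLinj (by rw [h0, map_zero]))
    refine ⟨r * γK, ?_⟩
    rw [map_mul, hr, hβf, map_inv₀]
    field_simp
  have hβf2 : βf ^ 2 = algebraMap K L (algebraMap (𝓞 K) K (u : 𝓞 K)) := by
    have hwcoe2 : algebraMap (𝓞 K) K w = algebraMap (𝓞 K) K (u : 𝓞 K) * γK ^ 2 := by
      rw [huγ, map_mul, map_pow, hγK]
    rw [hβf, mul_pow, hβ₂2, ← map_pow, ← map_mul, hwcoe2]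
    congr 1
    field_simp
  refine ⟨u, βf, hβf2, ?_⟩
  rw [eq_top_iff]
  intro v _
  obtain ⟨av, bv, hv⟩ := span_pair_of_quad hquadL hβfr v
  rw [hv]
  exact add_mem (Subalgebra.algebraMap_mem _ _)
    (mul_mem (Subalgebra.algebraMap_mem _ _)
      (Algebra.subset_adjoin (Set.mem_singleton _)))
end

section
/- Let p be a prime, Λ = ℤ_p[[T]], and let X be a finitely generated torsion Λ-module such that X/((1+T)² − 1)X is finite. Suppose σ : X → X is a ℤ_p-linear map with σ∘σ = id and σ((1+T)·x) = (1+T)^{−1}·σ(x) for all x ∈ X, where (1+T)^{−1} denotes the inverse of the unit 1+T of Λ. Then the ℚ_p-dimension of X ⊗_{ℤ_p} ℚ_p is even. -/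
open TensorProduct

open Function Module in
theorem aux_even {K V : Type*} [Field K] [CharZero K] [AddCommGroup V] [Module K V]
    (S G : V →ₗ[K] V) (hSS : ∀ v, S (S v) = v)
    (hSG : ∀ v, S (G v) = - G (S v)) (hG : Surjective G) :
    Even (Module.finrank K V) := by
  by_cases h : FiniteDimensional K V
  · have hGinj : Injective G := (LinearMap.injective_iff_surjective).mpr hG
    set A : V →ₗ[K] V := S - LinearMap.id with hA
    have hAapply : ∀ v, A v = S v - v := fun v => rfl
    have hrange : LinearMap.range A = LinearMap.ker (S + LinearMap.id) := by
      ext w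
      simp only [LinearMap.mem_range, LinearMap.mem_ker, LinearMap.add_apply,
        LinearMap.id_apply]
      constructor
      · rintro ⟨v, rfl⟩
        simp [hAapply, map_sub, hSS, sub_add_sub_cancel']
      · intro hw
        refine ⟨-(2⁻¹ : K) • w, ?_⟩
        have h2 : S w = -w := by linear_combination (norm := module) hw
        rw [hAapply, map_smul, h2]
        match_scalars <;> simp <;> ring
    have hmap : ∀ x ∈ LinearMap.ker A, G x ∈ LinearMap.ker (S + LinearMap.id) := by
      intro x hx
      have hx' : S x = x := by
        have := hAapply x ▸ (LinearMap.mem_ker.mp hx)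
        linear_combination (norm := module) this
      simp [LinearMap.mem_ker, hSG, hx']
    have hbij : Bijective (G.restrict hmap) := by
      constructor
      · intro a b hab
        have := congrArg Subtype.val hab
        exact Subtype.ext (hGinj this)
      · rintro ⟨w, hw⟩
        obtain ⟨v, rfl⟩ := hG w
        have hw' : S (G v) = - G v := by
          have h0 := LinearMap.mem_ker.mp hw
          simp only [LinearMap.add_apply, LinearMap.id_apply] at h0
          exact eq_neg_of_add_eq_zero_left h0
        have : G (S v) = G v := by
          have := hSG v
          rw [hw'] at this
          exact (neg_injective this).symm
        have hv : v ∈ LinearMap.ker A := by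
          simp [LinearMap.mem_ker, hAapply, hGinj this]
        exact ⟨⟨v, hv⟩, rfl⟩
    have e : (LinearMap.ker A) ≃ₗ[K] (LinearMap.ker (S + LinearMap.id)) :=
      LinearEquiv.ofBijective _ hbij
    have h1 := LinearMap.finrank_range_add_finrank_ker A
    rw [hrange, ← e.finrank_eq] at h1
    exact ⟨finrank K (LinearMap.ker A), by omega⟩
  · rw [Module.finrank_of_infinite_dimensional h]
    exact Even.zero

open Pointwise

/-- If `X` is a finitely generated torsion `ℤ_p[[T]]`-module with
`X/((1+T)² - 1)X` finite, admitting a `ℤ_p`-linear involution `σ` with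
`σ((1+T)·x) = (1+T)⁻¹·σ(x)`, then `λ = dim_{ℚ_p}(X ⊗ ℚ_p)` is even. -/
theorem lambda_invariant_even (p : ℕ) [Fact p.Prime]
    (X : Type*) [AddCommGroup X] [Module (PowerSeries ℤ_[p]) X]
    [Module ℤ_[p] X] [IsScalarTower ℤ_[p] (PowerSeries ℤ_[p]) X]
    [Module.Finite (PowerSeries ℤ_[p]) X]
    (htors : Module.IsTorsion (PowerSeries ℤ_[p]) X)
    (hfin : Finite (X ⧸ (Ideal.span {((1 + PowerSeries.X) ^ 2 - 1 : PowerSeries ℤ_[p])} •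
      (⊤ : Submodule (PowerSeries ℤ_[p]) X))))
    (σ : X →ₗ[ℤ_[p]] X)
    (hσσ : ∀ x : X, σ (σ x) = x)
    (u : (PowerSeries ℤ_[p])ˣ) (hu : (u : PowerSeries ℤ_[p]) = 1 + PowerSeries.X)
    (hσT : ∀ x : X, σ ((1 + PowerSeries.X : PowerSeries ℤ_[p]) • x) =
      ((u⁻¹ : (PowerSeries ℤ_[p])ˣ) : PowerSeries ℤ_[p]) • σ x) :
    Even (Module.finrank ℚ_[p] (ℚ_[p] ⊗[ℤ_[p]] X)) := by
  set Λ := PowerSeries ℤ_[p] with hΛ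
  set f : Λ := (1 + PowerSeries.X) ^ 2 - 1 with hf
  set g : Λ := (u : Λ) - ((u⁻¹ : Λˣ) : Λ) with hg
  have hfg : f = g * (u : Λ) := by
    rw [hg, sub_mul, Units.inv_mul, hf, ← hu, sq]
  let Lg : X →ₗ[ℤ_[p]] X := ((LinearMap.lsmul Λ X) g).restrictScalars ℤ_[p]
  have hLg : ∀ x : X, Lg x = g • x := fun x => rfl
  have hσu : ∀ x : X, σ ((u : Λ) • x) = ((u⁻¹ : Λˣ) : Λ) • σ x := by
    intro x; rw [hu]; exact hσT x
  have hσuinv : ∀ x : X, σ (((u⁻¹ : Λˣ) : Λ) • x) = (u : Λ) • σ x := by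
    intro x
    have h1 := hσu (((u⁻¹ : Λˣ) : Λ) • x)
    rw [← mul_smul, Units.mul_inv, one_smul] at h1
    rw [h1, ← mul_smul, Units.mul_inv, one_smul]
  have hanti : ∀ x : X, σ (g • x) = - (g • σ x) := by
    intro x
    rw [hg, sub_smul, map_sub, hσu, hσuinv, sub_smul]
    abel
  have key : ∀ x : X, ∃ n : ℕ, 0 < n ∧ ∃ y : X, (n : ℤ_[p]) • x = g • y := by
    intro x
    set N : Submodule Λ X := Ideal.span {f} • (⊤ : Submodule Λ X) with hN
    haveI : Finite (X ⧸ N) := hfin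
    set q : X ⧸ N := Submodule.Quotient.mk x with hqdef
    have hq : IsOfFinAddOrder q := isOfFinAddOrder_of_finite q
    refine ⟨addOrderOf q, hq.addOrderOf_pos, ?_⟩
    have h0 : (addOrderOf q) • q = 0 := addOrderOf_nsmul_eq_zero q
    have hmk : (Submodule.Quotient.mk (addOrderOf q • x) : X ⧸ N) = addOrderOf q • q := by
      rw [hqdef]; exact map_nsmul (N.mkQ) (addOrderOf q) x
    have hmem : (addOrderOf q • x) ∈ N :=
      (Submodule.Quotient.mk_eq_zero N).mp (hmk.trans h0)
    have hmem2 : (addOrderOf q • x) ∈ f • (⊤ : Submodule Λ X) := by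
      rw [← Submodule.ideal_span_singleton_smul]; exact hmem
    obtain ⟨y', -, hy'⟩ := Submodule.mem_map.mp hmem2
    refine ⟨(u : Λ) • y', ?_⟩
    rw [Nat.cast_smul_eq_nsmul, ← hy', ← mul_smul, ← hfg]
    rfl
  let S := σ.baseChange ℚ_[p]
  let G := Lg.baseChange ℚ_[p]
  refine aux_even S G ?_ ?_ ?_
  · intro v
    have hcomp : σ ∘ₗ σ = LinearMap.id := LinearMap.ext hσσ
    have hb : S ∘ₗ S = LinearMap.id := by
      rw [← LinearMap.baseChange_comp, hcomp, LinearMap.baseChange_id]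
    simpa using LinearMap.ext_iff.mp hb v
  · intro v
    have hcomp : σ ∘ₗ Lg = -(Lg ∘ₗ σ) := LinearMap.ext fun x => by
      simp only [LinearMap.comp_apply, LinearMap.neg_apply, hLg]
      exact hanti x
    have hb : S ∘ₗ G = -(G ∘ₗ S) := by
      rw [← LinearMap.baseChange_comp, hcomp, LinearMap.baseChange_neg,
        LinearMap.baseChange_comp]
    simpa using LinearMap.ext_iff.mp hb v
  · intro v
    induction v using TensorProduct.induction_on with
    | zero => exact ⟨0, map_zero _⟩
    | tmul a x =>
      obtain ⟨n, hn, y, hxy⟩ := key x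
      refine ⟨((n : ℚ_[p])⁻¹ * a) ⊗ₜ[ℤ_[p]] y, ?_⟩
      rw [LinearMap.baseChange_tmul, hLg, ← hxy, TensorProduct.tmul_smul,
        TensorProduct.smul_tmul', Nat.cast_smul_eq_nsmul, nsmul_eq_mul, ← mul_assoc,
        mul_inv_cancel₀ (Nat.cast_ne_zero.mpr hn.ne'), one_mul]
    | add v w hv hw =>
      obtain ⟨a, ha⟩ := hv
      obtain ⟨b, hb⟩ := hw
      exact ⟨a + b, by rw [map_add, ha, hb]⟩
end

section
/- Let p be a prime and let E = ⊕_j Λ/(f_j) be a finite direct sum of Λ-modules where each f_j is a distinguished polynomial, and set λ = Σ_j deg f_j. If λ ≥ 2, then the cardinality of E/ν₁E is at least p^m, where m = min(λ, p − 1). -/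
open DirectSum

section aux

variable (p : ℕ) [hp : Fact p.Prime]

/-- The map sending a power series to its first `m` coefficients mod `p`. -/
noncomputable def cmap (m : ℕ) (g : PowerSeries ℤ_[p]) : Fin m → ZMod p :=
  fun i => PadicInt.toZMod (PowerSeries.coeff (R := ℤ_[p]) i g)

lemma cmap_add (m : ℕ) (g h : PowerSeries ℤ_[p]) :
    cmap p m (g + h) = cmap p m g + cmap p m h := by
  funext i; simp [cmap]

lemma cmap_sub (m : ℕ) (g h : PowerSeries ℤ_[p]) :
    cmap p m (g - h) = cmap p m g - cmap p m h := by
  funext i; simp [cmap]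

lemma dvd_coeff_mul (u w : PowerSeries ℤ_[p]) (i : ℕ)
    (h : ∀ b ≤ i, (p : ℤ_[p]) ∣ PowerSeries.coeff (R := ℤ_[p]) b u) :
    (p : ℤ_[p]) ∣ PowerSeries.coeff (R := ℤ_[p]) i (u * w) := by
  rw [PowerSeries.coeff_mul]
  refine Finset.dvd_sum fun x hx => Dvd.dvd.mul_right (h x.1 ?_) _
  rw [Finset.HasAntidiagonal.mem_antidiagonal] at hx
  omega

lemma cmap_mul_eq_zero (m : ℕ) (u w : PowerSeries ℤ_[p])
    (hu : ∀ b < m, (p : ℤ_[p]) ∣ PowerSeries.coeff (R := ℤ_[p]) b u) :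
    cmap p m (u * w) = 0 := by
  funext i
  have hd : (p : ℤ_[p]) ∣ PowerSeries.coeff (R := ℤ_[p]) i (u * w) :=
    dvd_coeff_mul p u w i (fun b hb => hu b (lt_of_le_of_lt hb i.isLt))
  show PadicInt.toZMod (PowerSeries.coeff (R := ℤ_[p]) i (u * w)) = 0
  rw [← RingHom.mem_ker, PadicInt.ker_toZMod, PadicInt.maximalIdeal_eq_span_p,
    Ideal.mem_span_singleton]
  exact hd

/-- The low coefficients of `ν₁ = ∑_{k<p} (1+X)^k` are divisible by `p`. -/
lemma dvd_coeff_nuone (i : ℕ) (hi : i < p - 1) :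
    (p : ℤ_[p]) ∣ PowerSeries.coeff (R := ℤ_[p]) i
      (∑ k ∈ Finset.range p, (1 + PowerSeries.X) ^ k : PowerSeries ℤ_[p]) := by
  have h1 : (∑ k ∈ Finset.range p, (1 + PowerSeries.X) ^ k : PowerSeries ℤ_[p]) * PowerSeries.X
      = (1 + PowerSeries.X) ^ p - 1 := by
    have h := geom_sum_mul (1 + PowerSeries.X : PowerSeries ℤ_[p]) p
    rwa [add_sub_cancel_left] at h
  have hco : ((((1 + Polynomial.X) ^ p : Polynomial ℤ_[p])) : PowerSeries ℤ_[p])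
      = (1 + PowerSeries.X) ^ p := by
    rw [Polynomial.coe_pow, Polynomial.coe_add, Polynomial.coe_one, Polynomial.coe_X]
  have h2 : PowerSeries.coeff (R := ℤ_[p]) i
      (∑ k ∈ Finset.range p, (1 + PowerSeries.X) ^ k : PowerSeries ℤ_[p])
      = ((p.choose (i + 1) : ℕ) : ℤ_[p]) := by
    rw [← PowerSeries.coeff_succ_mul_X, h1, map_sub]
    have hc1 : PowerSeries.coeff (R := ℤ_[p]) (i + 1) (1 : PowerSeries ℤ_[p]) = 0 := by
      simp [PowerSeries.coeff_one]
    rw [hc1, sub_zero, ← hco, Polynomial.coeff_coe, Polynomial.coeff_one_add_X_pow]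
  rw [h2]
  exact Nat.cast_dvd_cast (hp.out.dvd_choose_self (Nat.succ_ne_zero i) (by omega))

/-- The coefficient map descends to the quotient by a distinguished polynomial. -/
noncomputable def phi (F : Polynomial ℤ_[p]) (hF : ∀ i < F.natDegree, (p : ℤ_[p]) ∣ F.coeff i) :
    (PowerSeries ℤ_[p] ⧸ Ideal.span {(F : PowerSeries ℤ_[p])}) →
      (Fin (min F.natDegree (p - 1)) → ZMod p) :=
  fun x => Quotient.liftOn' x (cmap p (min F.natDegree (p - 1))) (by
    intro a b hab
    have hq : (Submodule.Quotient.mk a :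
        PowerSeries ℤ_[p] ⧸ Ideal.span {(F : PowerSeries ℤ_[p])}) = Submodule.Quotient.mk b := by
      rw [← Submodule.Quotient.mk''_eq_mk, ← Submodule.Quotient.mk''_eq_mk]
      exact Quotient.sound' hab
    have hab' : a - b ∈ Ideal.span {(F : PowerSeries ℤ_[p])} :=
      (Submodule.Quotient.eq _).mp hq
    obtain ⟨c, hc⟩ := Ideal.mem_span_singleton'.mp hab'
    have hz : cmap p (min F.natDegree (p - 1)) (a - b) = 0 := by
      rw [← hc, mul_comm]
      refine cmap_mul_eq_zero p _ _ _ ?_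
      intro b hb
      rw [Polynomial.coeff_coe]
      exact hF b (lt_of_lt_of_le hb (min_le_left _ _))
    have hcs := cmap_sub p (min F.natDegree (p - 1)) a b
    rw [hz] at hcs
    exact sub_eq_zero.mp hcs.symm)

lemma phi_mk (F : Polynomial ℤ_[p]) (hF : ∀ i < F.natDegree, (p : ℤ_[p]) ∣ F.coeff i)
    (g : PowerSeries ℤ_[p]) :
    phi p F hF (Submodule.Quotient.mk g) = cmap p (min F.natDegree (p - 1)) g := rfl

lemma phi_add (F : Polynomial ℤ_[p]) (hF : ∀ i < F.natDegree, (p : ℤ_[p]) ∣ F.coeff i)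
    (a b : PowerSeries ℤ_[p] ⧸ Ideal.span {(F : PowerSeries ℤ_[p])}) :
    phi p F hF (a + b) = phi p F hF a + phi p F hF b := by
  refine Quotient.inductionOn₂' a b fun x y => ?_
  simp only [Submodule.Quotient.mk''_eq_mk]
  rw [← Submodule.Quotient.mk_add, phi_mk, phi_mk, phi_mk, cmap_add]

lemma phi_sub (F : Polynomial ℤ_[p]) (hF : ∀ i < F.natDegree, (p : ℤ_[p]) ∣ F.coeff i)
    (a b : PowerSeries ℤ_[p] ⧸ Ideal.span {(F : PowerSeries ℤ_[p])}) :
    phi p F hF (a - b) = phi p F hF a - phi p F hF b := by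
  refine Quotient.inductionOn₂' a b fun x y => ?_
  simp only [Submodule.Quotient.mk''_eq_mk]
  rw [← Submodule.Quotient.mk_sub, phi_mk, phi_mk, phi_mk, cmap_sub]

lemma phi_surjective (F : Polynomial ℤ_[p])
    (hF : ∀ i < F.natDegree, (p : ℤ_[p]) ∣ F.coeff i) :
    Function.Surjective (phi p F hF) := by
  haveI : NeZero p := ⟨hp.out.ne_zero⟩
  intro v
  refine ⟨Submodule.Quotient.mk
    (∑ i : Fin (min F.natDegree (p - 1)),
      PowerSeries.monomial (R := ℤ_[p]) (i : ℕ) (((v i).val : ℤ_[p]))), ?_⟩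
  rw [phi_mk]
  funext i
  simp only [cmap]
  rw [map_sum]
  have hsum : ∑ i' : Fin (min F.natDegree (p - 1)), PowerSeries.coeff (R := ℤ_[p]) i
      (PowerSeries.monomial (R := ℤ_[p]) (i' : ℕ) (((v i').val : ℤ_[p])))
      = ((v i).val : ℤ_[p]) := by
    rw [Finset.sum_eq_single i]
    · rw [PowerSeries.coeff_monomial, if_pos rfl]
    · intro b _ hb
      rw [PowerSeries.coeff_monomial, if_neg]
      exact fun h => hb (Fin.ext h).symm
    · intro h
      exact absurd (Finset.mem_univ i) h
  rw [hsum, map_natCast]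
  exact ZMod.natCast_rightInverse (v i)

end aux

/-- A distinguished polynomial over `ℤ_p`: monic, with all non-leading
coefficients divisible by `p`. -/
def IsDistinguished (p : ℕ) [Fact p.Prime] (f : Polynomial ℤ_[p]) : Prop :=
  f.Monic ∧ ∀ i < f.natDegree, (p : ℤ_[p]) ∣ f.coeff i

/-- For an elementary `Λ = ℤ_p[[T]]`-module `E = ⊕ Λ/(f_j)` with each `f_j`
distinguished and `λ = Σ deg f_j ≥ 2`, the quotient `E/ν₁E` has cardinality at
least `p^min(λ, p-1)`, where `ν₁ = ((1+T)^p - 1)/T = Σ_{i<p} (1+T)^i`. -/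
theorem card_quotient_nu_one_ge (p : ℕ) [Fact p.Prime]
    (ι : Type*) [Fintype ι] [DecidableEq ι]
    (f : ι → Polynomial ℤ_[p]) (hf : ∀ j, IsDistinguished p (f j))
    (lam : ℕ) (hlam : lam = ∑ j, (f j).natDegree) (hlam2 : 2 ≤ lam) :
    (p : Cardinal) ^ (min lam (p - 1)) ≤
      Cardinal.mk
        (@HasQuotient.Quotient (⨁ j, (PowerSeries ℤ_[p] ⧸ Ideal.span {((f j : Polynomial ℤ_[p]) : PowerSeries ℤ_[p])})) _
          (@Submodule.hasQuotient (PowerSeries ℤ_[p]) (⨁ j, (PowerSeries ℤ_[p] ⧸ Ideal.span {((f j : Polynomial ℤ_[p]) : PowerSeries ℤ_[p])})) _ _ _)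
          (Ideal.span {(∑ i ∈ Finset.range p, (1 + PowerSeries.X) ^ i : PowerSeries ℤ_[p])} •
            (⊤ : Submodule (PowerSeries ℤ_[p])
              (⨁ j, (PowerSeries ℤ_[p] ⧸
                Ideal.span {((f j : Polynomial ℤ_[p]) : PowerSeries ℤ_[p])}))))) := by
  classical
  haveI : NeZero p := ⟨‹Fact p.Prime›.out.ne_zero⟩
  set ν : PowerSeries ℤ_[p] :=
    (∑ i ∈ Finset.range p, (1 + PowerSeries.X) ^ i : PowerSeries ℤ_[p])
  set E := (⨁ j, (PowerSeries ℤ_[p] ⧸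
    Ideal.span {((f j : Polynomial ℤ_[p]) : PowerSeries ℤ_[p])}))
  set N : Submodule (PowerSeries ℤ_[p]) E := Ideal.span {ν} • ⊤
  set m : ι → ℕ := fun j => min (f j).natDegree (p - 1)
  -- the global coefficient map
  set Φ : E → ∀ j, Fin (m j) → ZMod p := fun e j => phi p (f j) (hf j).2 (e j) with hΦdef
  -- Φ kills N
  have hker : ∀ x ∈ N, Φ x = 0 := by
    intro x hx
    refine Submodule.smul_induction_on hx ?_ ?_
    · intro r hr n _
      obtain ⟨c, hc⟩ := Ideal.mem_span_singleton'.mp hr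
      funext j
      show phi p (f j) (hf j).2 ((r • n) j) = 0
      have h1 : (r • n) j = r • (n j) := DirectSum.smul_apply r n j
      obtain ⟨g, hg⟩ := Submodule.Quotient.mk_surjective _ (n j)
      rw [h1, ← hg, ← Submodule.Quotient.mk_smul, phi_mk]
      have hrg : r • g = ν * (c * g) := by
        rw [← hc, smul_eq_mul]; ring
      rw [hrg]
      exact cmap_mul_eq_zero p _ _ _
        (fun b hb => dvd_coeff_nuone p b (lt_of_lt_of_le hb (min_le_right _ _)))
    · intro x y hxz hyz
      funext j
      show phi p (f j) (hf j).2 ((x + y) j) = 0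
      rw [DirectSum.add_apply, phi_add]
      have hx0 : phi p (f j) (hf j).2 (x j) = 0 := by simpa using congrFun hxz j
      have hy0 : phi p (f j) (hf j).2 (y j) = 0 := by simpa using congrFun hyz j
      rw [hx0, hy0, add_zero]
  -- Φ is constant on cosets of N
  have hwd : ∀ a b : E, @Setoid.r E (Submodule.quotientRel N) a b → Φ a = Φ b := by
    intro a b hab
    have hq : (Submodule.Quotient.mk a : @HasQuotient.Quotient E _ (@Submodule.hasQuotient (PowerSeries ℤ_[p]) E _ _ _) N) = Submodule.Quotient.mk b := by
      rw [← Submodule.Quotient.mk''_eq_mk, ← Submodule.Quotient.mk''_eq_mk]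
      exact Quotient.sound' hab
    have h : a - b ∈ N := (Submodule.Quotient.eq _).mp hq
    have hsub : Φ (a - b) = Φ a - Φ b := by
      funext j
      show phi p (f j) (hf j).2 ((a - b) j) = _
      rw [DirectSum.sub_apply, phi_sub]
      rfl
    have h0 := hker (a - b) h
    rw [hsub] at h0
    exact sub_eq_zero.mp h0
  -- Φ is surjective
  have hΦsurj : Function.Surjective Φ := by
    intro t
    choose g hg using fun j => phi_surjective p (f j) (hf j).2 (t j)
    obtain ⟨e, he⟩ := (DirectSum.addEquivProd
      (fun j => PowerSeries ℤ_[p] ⧸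
        Ideal.span {((f j : Polynomial ℤ_[p]) : PowerSeries ℤ_[p])})).surjective g
    refine ⟨e, ?_⟩
    funext j
    show phi p (f j) (hf j).2 (e j) = t j
    have hej : e j = g j := congrFun he j
    rw [hej]
    exact hg j
  -- the descended map is surjective, giving the cardinality bound
  have hcard : Cardinal.mk (∀ j, Fin (m j) → ZMod p) ≤ Cardinal.mk (@HasQuotient.Quotient E _ (@Submodule.hasQuotient (PowerSeries ℤ_[p]) E _ _ _) N) := by
    refine Cardinal.mk_le_of_surjective
      (f := fun x : @HasQuotient.Quotient E _ (@Submodule.hasQuotient (PowerSeries ℤ_[p]) E _ _ _) N => Quotient.liftOn' x Φ hwd) ?_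
    intro t
    obtain ⟨e, he⟩ := hΦsurj t
    refine ⟨Submodule.Quotient.mk e, ?_⟩
    exact he
  -- compute the cardinality of the target
  have hmk : Cardinal.mk (∀ j, Fin (m j) → ZMod p) = ((p ^ (∑ j, m j) : ℕ) : Cardinal) := by
    rw [Cardinal.mk_fintype]
    congr 1
    rw [Fintype.card_pi]
    have hc : ∀ j, Fintype.card (Fin (m j) → ZMod p) = p ^ (m j) := by
      intro j
      rw [Fintype.card_fun, ZMod.card, Fintype.card_fin]
    rw [Finset.prod_congr rfl (fun j _ => hc j), Finset.prod_pow_eq_pow_sum]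
  -- the exponent inequality
  have hkey : min lam (p - 1) ≤ ∑ j, m j := by
    by_cases h : ∀ j, (f j).natDegree ≤ p - 1
    · have he : ∑ j, m j = ∑ j, (f j).natDegree :=
        Finset.sum_congr rfl (fun j _ => min_eq_left (h j))
      rw [he, ← hlam]
      exact min_le_left _ _
    · push_neg at h
      obtain ⟨j, hj⟩ := h
      calc min lam (p - 1) ≤ p - 1 := min_le_right _ _
        _ = m j := (min_eq_right hj.le).symm
        _ ≤ ∑ j, m j := Finset.single_le_sum (fun _ _ => Nat.zero_le _) (Finset.mem_univ j)
  calc (p : Cardinal) ^ (min lam (p - 1))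
      = ((p ^ (min lam (p - 1)) : ℕ) : Cardinal) := by push_cast; rfl
    _ ≤ ((p ^ (∑ j, m j) : ℕ) : Cardinal) := by
        exact_mod_cast Nat.pow_le_pow_right (‹Fact p.Prime›.out.pos) hkey
    _ = Cardinal.mk (∀ j, Fin (m j) → ZMod p) := hmk.symm
    _ ≤ Cardinal.mk (@HasQuotient.Quotient E _ (@Submodule.hasQuotient (PowerSeries ℤ_[p]) E _ _ _) N) := hcard
end

section
/- Let p = 2 and let E = ⊕_j Λ/(f_j) be a finite direct sum of Λ-modules where each f_j is a distinguished polynomial, and set λ = Σ_j deg f_j. If λ = 2 then the cardinality of E/ν₂E is at least 16, and if λ ≥ 3 then the cardinality of E/ν₂E is at least 8. -/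
open DirectSum

/-- A distinguished polynomial over `ℤ₂`: monic, with all non-leading
coefficients divisible by `2`. -/
def IsDistinguished2 (f : Polynomial ℤ_[2]) : Prop :=
  f.Monic ∧ ∀ i < f.natDegree, (2 : ℤ_[2]) ∣ f.coeff i

/-- Shortcut instance (port repair): Lean no longer finds the `AddCommGroup` structure on
`⨁ j, R ⧸ I j` inside the `HasQuotient` search for `PowerSeries ℤ_[2]`; this is just
Mathlib's own instance, restated. -/
instance instAddCommGroupDirectSumQuotient {ι R : Type*} [CommRing R] (I : ι → Ideal R) :
    AddCommGroup (⨁ j, R ⧸ I j) := inferInstance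


open Polynomial PowerSeries

namespace NuProof

variable {R S : Type*} [CommRing R] [CommRing S]

theorem eval2_sum_range (σ : R →+* S) {a : S} {N : ℕ} (hN : a ^ N = 0) (p : R[X]) :
    p.eval₂ σ a = ∑ i ∈ Finset.range N, σ (p.coeff i) * a ^ i := by
  have h1 : p.eval₂ σ a
      = ∑ i ∈ Finset.range (max N (p.natDegree + 1)), σ (p.coeff i) * a ^ i :=
    Polynomial.eval₂_eq_sum_range' σ
      (lt_of_lt_of_le (Nat.lt_succ_self _) (le_max_right _ _)) a
  rw [h1]
  symm
  apply Finset.sum_subset (Finset.range_subset_range.2 (le_max_left _ _))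
  intro i _ hi
  have hNi : N ≤ i := by simpa using hi
  have : a ^ i = 0 := by
    have : a ^ i = a ^ N * a ^ (i - N) := by rw [← pow_add]; congr 1; omega
    rw [this, hN, zero_mul]
  rw [this, mul_zero]

/-- Evaluation of a power series at a nilpotent element (truncate then evaluate). -/
noncomputable def evalNilFun (σ : R →+* S) (a : S) (N : ℕ) : PowerSeries R → S :=
  fun f => (PowerSeries.trunc N f).eval₂ σ a

theorem evalNilFun_eq_sum (σ : R →+* S) {a : S} {N : ℕ} (hN : a ^ N = 0) (f : PowerSeries R) :
    evalNilFun σ a N f = ∑ i ∈ Finset.range N, σ (PowerSeries.coeff i f) * a ^ i := by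
  rw [evalNilFun, eval2_sum_range σ hN]
  refine Finset.sum_congr rfl fun i hi => ?_
  rw [PowerSeries.coeff_trunc, if_pos (Finset.mem_range.1 hi)]

/-- Ring hom version. -/
noncomputable def evalNil (σ : R →+* S) (a : S) (N : ℕ) (hN : a ^ (N + 1) = 0) :
    PowerSeries R →+* S where
  toFun := evalNilFun σ a (N + 1)
  map_one' := by
    rw [evalNilFun_eq_sum σ hN]
    rw [Finset.sum_eq_single_of_mem 0 (Finset.mem_range.2 (Nat.succ_pos _))]
    · simp
    · intro i _ hi
      rw [PowerSeries.coeff_one, if_neg hi, map_zero, zero_mul]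
  map_mul' := by
    intro f g
    have key : ∀ i, i < N + 1 →
        ((PowerSeries.trunc (N+1) f) * (PowerSeries.trunc (N+1) g)).coeff i
          = PowerSeries.coeff i (f * g) := by
      intro i hi
      rw [Polynomial.coeff_mul, PowerSeries.coeff_mul]
      refine Finset.sum_congr rfl fun p hp => ?_
      have hp' := Finset.HasAntidiagonal.mem_antidiagonal.1 hp
      rw [PowerSeries.coeff_trunc, PowerSeries.coeff_trunc,
        if_pos (by omega), if_pos (by omega)]
    show evalNilFun σ a (N+1) (f * g) = _
    rw [evalNilFun_eq_sum σ hN]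
    have h2 : evalNilFun σ a (N+1) f * evalNilFun σ a (N+1) g
        = ((PowerSeries.trunc (N+1) f) * (PowerSeries.trunc (N+1) g)).eval₂ σ a := by
      rw [Polynomial.eval₂_mul]; rfl
    rw [h2, eval2_sum_range σ hN]
    refine Finset.sum_congr rfl fun i hi => ?_
    rw [key i (Finset.mem_range.1 hi)]
  map_zero' := by
    show evalNilFun σ a (N+1) 0 = 0
    rw [evalNilFun_eq_sum σ hN]
    simp
  map_add' := by
    intro f g
    show evalNilFun σ a (N+1) (f + g) = evalNilFun σ a (N+1) f + evalNilFun σ a (N+1) g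
    simp only [evalNilFun_eq_sum σ hN, map_add, add_mul, Finset.sum_add_distrib]

theorem evalNil_coe (σ : R →+* S) (a : S) (N : ℕ) (hN : a ^ (N + 1) = 0) (P : R[X]) :
    evalNil σ a N hN (P : PowerSeries R) = P.eval₂ σ a := by
  show evalNilFun σ a (N+1) _ = _
  rw [evalNilFun_eq_sum σ hN, eval2_sum_range σ hN]
  refine Finset.sum_congr rfl fun i _ => ?_
  rw [Polynomial.coeff_coe]

theorem evalNil_X (σ : R →+* S) (a : S) (N : ℕ) (hN : a ^ (N + 1) = 0) :
    evalNil σ a N hN PowerSeries.X = a := by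
  rw [← Polynomial.coe_X, evalNil_coe, Polynomial.eval₂_X]

end NuProof

noncomputable section

namespace NuProof

open Polynomial PowerSeries

def nu : PowerSeries ℤ_[2] := ∑ i ∈ Finset.range 4, (1 + PowerSeries.X) ^ i

theorem sum_pow4 {S : Type*} [CommRing S] (t : S) :
    ∑ i ∈ Finset.range 4, (1 + t) ^ i = t ^ 3 + 4 * t ^ 2 + 6 * t + 4 := by
  simp only [Finset.sum_range_succ, Finset.sum_range_zero]
  ring

theorem phi_nu {S : Type*} [CommRing S] (φ : PowerSeries ℤ_[2] →+* S) {t : S}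
    (ht : φ PowerSeries.X = t) : φ nu = t ^ 3 + 4 * t ^ 2 + 6 * t + 4 := by
  rw [nu, map_sum]
  simp_rw [map_pow, map_add, map_one, ht]
  exact sum_pow4 t

theorem toZModPow_surj (e : ℕ) : Function.Surjective (PadicInt.toZModPow (p := 2) e) := by
  haveI : NeZero (2 ^ e) := ⟨pow_ne_zero _ two_ne_zero⟩
  intro y
  refine ⟨(y.val : ℤ_[2]), ?_⟩
  rw [map_natCast]
  exact ZMod.natCast_rightInverse y

section Setup

variable (e : ℕ) (g : Polynomial (ZMod (2 ^ e)))

/-- Evaluation of an integral power series at the root of `g`,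
assuming the root is nilpotent. -/
def φA (hr : AdjoinRoot.root g ^ (5 + 1) = 0) : PowerSeries ℤ_[2] →+* AdjoinRoot g :=
  evalNil ((AdjoinRoot.of g).comp (PadicInt.toZModPow e)) (AdjoinRoot.root g) 5 hr

theorem φA_coe (hr : AdjoinRoot.root g ^ (5 + 1) = 0) (P : Polynomial ℤ_[2]) :
    φA e g hr (P : PowerSeries ℤ_[2]) = AdjoinRoot.mk g (P.map (PadicInt.toZModPow e)) := by
  rw [φA, evalNil_coe, ← Polynomial.eval₂_map, ← AdjoinRoot.algebraMap_eq,
    ← Polynomial.aeval_def, AdjoinRoot.aeval_eq]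

theorem φA_X (hr : AdjoinRoot.root g ^ (5 + 1) = 0) :
    φA e g hr PowerSeries.X = AdjoinRoot.root g :=
  evalNil_X _ _ _ _

theorem φA_surj (hr : AdjoinRoot.root g ^ (5 + 1) = 0) :
    Function.Surjective (φA e g hr) := by
  intro b
  obtain ⟨P, rfl⟩ := AdjoinRoot.mk_surjective b
  obtain ⟨Q, rfl⟩ := Polynomial.map_surjective _ (toZModPow_surj e) P
  exact ⟨(Q : PowerSeries ℤ_[2]), φA_coe e g hr Q⟩

theorem φA_nu (hr : AdjoinRoot.root g ^ (5 + 1) = 0) :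
    φA e g hr nu = (AdjoinRoot.root g) ^ 3 + 4 * (AdjoinRoot.root g) ^ 2
      + 6 * AdjoinRoot.root g + 4 :=
  phi_nu _ (φA_X e g hr)

theorem card_adjoinRoot (hg : g.Monic) :
    Nat.card (AdjoinRoot g) = (2 ^ e) ^ g.natDegree ∧ Finite (AdjoinRoot g) := by
  haveI : NeZero (2 ^ e) := ⟨pow_ne_zero _ two_ne_zero⟩
  classical
  have hfin : Finite (AdjoinRoot g) :=
    Finite.of_equiv _ (AdjoinRoot.powerBasis' hg).basis.equivFun.toEquiv.symm
  refine ⟨?_, hfin⟩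
  rw [Nat.card_congr (AdjoinRoot.powerBasis' hg).basis.equivFun.toEquiv,
    Nat.card_eq_fintype_card, Fintype.card_fun, ZMod.card, Fintype.card_fin,
    AdjoinRoot.powerBasis'_dim]

end Setup

theorem monic_deg1 {f : Polynomial ℤ_[2]} (hm : f.Monic) (hd : f.natDegree = 1) :
    f = Polynomial.X + Polynomial.C (f.coeff 0) := by
  ext n
  rcases n with _ | _ | n
  · simp
  · have h1 : f.coeff 1 = 1 := by simpa [hd] using hm.coeff_natDegree
    simp [h1, Polynomial.coeff_X, Polynomial.coeff_C]
  · have hlt : f.natDegree < n + 2 := by omega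
    simp [Polynomial.coeff_X, Polynomial.coeff_C,
      Polynomial.coeff_eq_zero_of_natDegree_lt hlt]

theorem monic_deg2 {f : Polynomial ℤ_[2]} (hm : f.Monic) (hd : f.natDegree = 2) :
    f = Polynomial.X ^ 2 + Polynomial.C (f.coeff 1) * Polynomial.X
      + Polynomial.C (f.coeff 0) := by
  ext n
  rcases n with _ | _ | _ | n
  · simp
  · simp [Polynomial.coeff_X, Polynomial.coeff_C]
  · have h2 : f.coeff 2 = 1 := by simpa [hd] using hm.coeff_natDegree
    simp [h2, Polynomial.coeff_X, Polynomial.coeff_C]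
  · have hlt : f.natDegree < n + 3 := by omega
    simp [Polynomial.coeff_X, Polynomial.coeff_C,
      Polynomial.coeff_eq_zero_of_natDegree_lt hlt]

theorem card_bound {A : Type} [CommRing A] [Finite A] {I : Ideal A} {n : ℕ}
    (h : n ≤ Nat.card (A ⧸ I)) : ((n : ℕ) : Cardinal) ≤ Cardinal.mk (A ⧸ I) := by
  haveI : Finite (A ⧸ I) := Quotient.finite _
  haveI := Fintype.ofFinite (A ⧸ I)
  rw [Cardinal.mk_fintype]
  exact_mod_cast h.trans_eq Nat.card_eq_fintype_card

theorem card_quotient_ge {A : Type} [CommRing A] [Finite A] (I : Ideal A) {cI n : ℕ}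
    (hI : Nat.card I ≤ cI) (hA : n * cI ≤ Nat.card A) : n ≤ Nat.card (A ⧸ I) := by
  classical
  haveI : Finite (A ⧸ I) := Quotient.finite _
  obtain ⟨s, hs⟩ := (Ideal.Quotient.mk_surjective (I := I)).hasRightInverse
  set mk := Ideal.Quotient.mk I with hmk
  have mem : ∀ a : A, a - s (mk a) ∈ I := by
    intro a
    rw [← Ideal.Quotient.eq_zero_iff_mem, map_sub, hs (mk a), sub_self]
  let F : A → (A ⧸ I) × I := fun a => (mk a, ⟨a - s (mk a), mem a⟩)
  have hinj : Function.Injective F := by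
    intro a b hab
    have h1 : mk a = mk b := congrArg Prod.fst hab
    have h2 : a - s (mk a) = b - s (mk b) := congrArg (fun q => (q.2 : A)) hab
    rw [h1] at h2
    exact sub_left_injective h2
  have hle : Nat.card A ≤ Nat.card ((A ⧸ I) × I) := Nat.card_le_card_of_injective F hinj
  rw [Nat.card_prod] at hle
  have hIpos : 0 < cI := lt_of_lt_of_le Nat.card_pos hI
  have : n * cI ≤ Nat.card (A ⧸ I) * cI := by
    calc n * cI ≤ Nat.card A := hA
    _ ≤ Nat.card (A ⧸ I) * Nat.card I := hle
    _ ≤ Nat.card (A ⧸ I) * cI := Nat.mul_le_mul_left _ hI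
  exact Nat.le_of_mul_le_mul_right this hIpos

end NuProof
namespace NuProof

open Polynomial PowerSeries

theorem mk_eq_natCard {A : Type} [Finite A] : Cardinal.mk A = (Nat.card A : Cardinal) := by
  haveI := Fintype.ofFinite A
  rw [Cardinal.mk_fintype, Nat.card_eq_fintype_card]

theorem mk_quot_bot {A : Type} [CommRing A] {x y : A} (hx : x = 0) (hy : y = 0) :
    Cardinal.mk (A ⧸ Ideal.span {x, y}) = Cardinal.mk A := by
  subst hx; subst hy
  have hspan : Ideal.span ({(0 : A), 0} : Set A) = ⊥ := by simp
  exact Cardinal.mk_congr (Submodule.quotEquivOfEqBot _ hspan).toEquiv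

theorem comp_deg1 {f : Polynomial ℤ_[2]} (hf : IsDistinguished2 f) (hd : f.natDegree = 1) :
    ∃ (A : Type) (_ : CommRing A) (φ : PowerSeries ℤ_[2] →+* A),
      Function.Surjective φ ∧
      ((2 ^ 2 : ℕ) : Cardinal) ≤
        Cardinal.mk (A ⧸ Ideal.span {φ (f : PowerSeries ℤ_[2]), φ nu}) := by
  classical
  set σ := PadicInt.toZModPow (p := 2) 2 with hσ
  set g : Polynomial (ZMod (2 ^ 2)) := f.map σ with hg
  have hgm : g.Monic := hf.1.map σ
  set t := AdjoinRoot.root g with htdef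
  obtain ⟨u, hu⟩ := hf.2 0 (by omega)
  have hgeq : g = Polynomial.X + Polynomial.C (σ (f.coeff 0)) := by
    rw [hg]
    conv_lhs => rw [monic_deg1 hf.1 hd]
    simp [Polynomial.map_add]
  have hrel : t + AdjoinRoot.of g (σ (f.coeff 0)) = 0 := by
    have h0 : AdjoinRoot.mk g (Polynomial.X + Polynomial.C (σ (f.coeff 0))) = 0 := by
      rw [← hgeq]; exact AdjoinRoot.mk_self
    rwa [map_add, AdjoinRoot.mk_X, AdjoinRoot.mk_C] at h0
  have ht : t = - AdjoinRoot.of g (σ (f.coeff 0)) := eq_neg_of_add_eq_zero_left hrel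
  have hc2 : σ (f.coeff 0) * σ (f.coeff 0) = 0 := by
    rw [← map_mul]
    have h1 : f.coeff 0 * f.coeff 0 = 4 * (u * u) := by rw [hu]; ring
    rw [h1, map_mul]
    have h4 : σ (4 : ℤ_[2]) = 0 := by
      rw [map_ofNat]
      decide
    rw [h4, zero_mul]
  have ht2 : t ^ 2 = 0 := by
    have h1 : t ^ 2 = AdjoinRoot.of g (σ (f.coeff 0)) * AdjoinRoot.of g (σ (f.coeff 0)) := by
      rw [ht]; ring
    rw [h1, ← map_mul, hc2, map_zero]
  have hr : t ^ (5 + 1) = 0 := by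
    have h6 : t ^ (5 + 1) = (t ^ 2) ^ 3 := by ring
    rw [h6, ht2, zero_pow (by norm_num)]
  have hφf : φA 2 g hr (f : PowerSeries ℤ_[2]) = 0 := by
    rw [φA_coe, ← hg]
    exact AdjoinRoot.mk_self
  have hc6 : (6 : ZMod (2 ^ 2)) * σ (f.coeff 0) = 0 := by
    rw [hu, map_mul]
    have h2 : σ (2 : ℤ_[2]) = 2 := map_ofNat σ 2
    rw [h2]
    have h1 : (6 : ZMod (2 ^ 2)) * (2 * σ u) = 12 * σ u := by ring
    rw [h1]
    have h12 : (12 : ZMod (2 ^ 2)) = 0 := by decide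
    rw [h12, zero_mul]
  have hφnu : φA 2 g hr nu = 0 := by
    rw [φA_nu]
    have h4 : (4 : AdjoinRoot g) = AdjoinRoot.of g 4 := (map_ofNat _ 4).symm
    have h6 : (6 : AdjoinRoot g) = AdjoinRoot.of g 6 := (map_ofNat _ 6).symm
    have e1 : t ^ 3 = 0 := by
      have h1 : t ^ 3 = t ^ 2 * t := by ring
      rw [h1, ht2, zero_mul]
    have h4z : (4 : AdjoinRoot g) = 0 := by
      rw [h4]
      have h0 : (4 : ZMod (2 ^ 2)) = 0 := by decide
      rw [h0, map_zero]
    have h6t : (6 : AdjoinRoot g) * t = 0 := by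
      rw [h6, ht, mul_neg, ← map_mul, hc6, map_zero, neg_zero]
    rw [e1, ht2, h6t, h4z]
    ring
  refine ⟨AdjoinRoot g, inferInstance, φA 2 g hr, φA_surj 2 g hr, ?_⟩
  rw [mk_quot_bot hφf hφnu]
  obtain ⟨hcard, hfin⟩ := card_adjoinRoot 2 g hgm
  haveI := hfin
  haveI : Nontrivial (ZMod (2 ^ 2)) := ⟨0, 1, by decide⟩
  have hdeg : g.natDegree = 1 := by rw [hg, Polynomial.Monic.natDegree_map hf.1, hd]
  rw [hdeg] at hcard
  rw [mk_eq_natCard, hcard]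
  norm_num

end NuProof
namespace NuProof

open Polynomial PowerSeries

theorem comp_deg3 {f : Polynomial ℤ_[2]} (hf : IsDistinguished2 f) (hd : 3 ≤ f.natDegree) :
    ∃ (A : Type) (_ : CommRing A) (φ : PowerSeries ℤ_[2] →+* A),
      Function.Surjective φ ∧
      ((2 ^ 3 : ℕ) : Cardinal) ≤
        Cardinal.mk (A ⧸ Ideal.span {φ (f : PowerSeries ℤ_[2]), φ nu}) := by
  classical
  set σ := PadicInt.toZModPow (p := 2) 1 with hσ
  set g : Polynomial (ZMod (2 ^ 1)) := Polynomial.X ^ 3 with hg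
  have hgm : g.Monic := Polynomial.monic_X_pow 3
  haveI : Nontrivial (ZMod (2 ^ 1)) := ⟨0, 1, by decide⟩
  set t := AdjoinRoot.root g with htdef
  have ht3 : t ^ 3 = 0 := by
    have h1 : t ^ 3 = AdjoinRoot.mk g (Polynomial.X ^ 3) := by
      rw [map_pow, AdjoinRoot.mk_X]
    rw [h1, ← hg]
    exact AdjoinRoot.mk_self
  have hr : t ^ (5 + 1) = 0 := by
    have h : t ^ (5 + 1) = (t ^ 3) ^ 2 := by ring
    rw [h, ht3, zero_pow (by norm_num)]
  have hmap : f.map σ = Polynomial.X ^ f.natDegree := by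
    ext n
    rw [Polynomial.coeff_map, Polynomial.coeff_X_pow]
    rcases lt_trichotomy n f.natDegree with h | h | h
    · obtain ⟨u, hu⟩ := hf.2 n h
      rw [if_neg (by omega), hu, map_mul]
      have h2 : σ (2 : ℤ_[2]) = 0 := by rw [map_ofNat]; decide
      rw [h2, zero_mul]
    · rw [if_pos h, h, hf.1.coeff_natDegree, map_one]
    · rw [Polynomial.coeff_eq_zero_of_natDegree_lt h, map_zero, if_neg (by omega)]
  have hφf : φA 1 g hr (f : PowerSeries ℤ_[2]) = 0 := by
    rw [φA_coe, hmap]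
    obtain ⟨m, hm⟩ : ∃ m, f.natDegree = 3 + m := ⟨f.natDegree - 3, by omega⟩
    rw [hm, pow_add, map_mul]
    have h1 : AdjoinRoot.mk g (Polynomial.X ^ 3) = 0 := by
      rw [← hg]; exact AdjoinRoot.mk_self
    rw [h1, zero_mul]
  have hφnu : φA 1 g hr nu = 0 := by
    rw [φA_nu]
    have h4 : (4 : AdjoinRoot g) = 0 := by
      have h1 : (4 : AdjoinRoot g) = AdjoinRoot.of g 4 := (map_ofNat _ 4).symm
      rw [h1, show (4 : ZMod (2 ^ 1)) = 0 by decide, map_zero]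
    have h6 : (6 : AdjoinRoot g) = 0 := by
      have h1 : (6 : AdjoinRoot g) = AdjoinRoot.of g 6 := (map_ofNat _ 6).symm
      rw [h1, show (6 : ZMod (2 ^ 1)) = 0 by decide, map_zero]
    rw [ht3, h4, h6]
    ring
  refine ⟨_, inferInstance, φA 1 g hr, φA_surj 1 g hr, ?_⟩
  rw [mk_quot_bot hφf hφnu]
  obtain ⟨hcard, hfin⟩ := card_adjoinRoot 1 g hgm
  haveI := hfin
  have hdeg : g.natDegree = 3 := by rw [hg]; exact Polynomial.natDegree_X_pow 3
  rw [hdeg] at hcard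
  rw [mk_eq_natCard, hcard]
  norm_num

set_option maxRecDepth 10000 in
theorem M_image_card : ∀ U W : ZMod (2 ^ 3),
    ((Finset.univ.image (fun q : ZMod (2 ^ 3) × ZMod (2 ^ 3) =>
      (q.1 * ((2*U)*(2*W) - 4*(2*W) + 4) - q.2 * (2*W) * ((2*U)*(2*U) - (2*W) - 4*(2*U) + 6),
       q.1 * ((2*U)*(2*U) - (2*W) - 4*(2*U) + 6)
         + q.2 * (((2*U)*(2*W) - 4*(2*W) + 4) - (2*U)*((2*U)*(2*U) - (2*W) - 4*(2*U) + 6))))).card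
      ≤ 4) := by
  decide

theorem comp_deg2 {f : Polynomial ℤ_[2]} (hf : IsDistinguished2 f) (hd : f.natDegree = 2) :
    ∃ (A : Type) (_ : CommRing A) (φ : PowerSeries ℤ_[2] →+* A),
      Function.Surjective φ ∧
      ((2 ^ 4 : ℕ) : Cardinal) ≤
        Cardinal.mk (A ⧸ Ideal.span {φ (f : PowerSeries ℤ_[2]), φ nu}) := by
  classical
  set σ := PadicInt.toZModPow (p := 2) 3 with hσ
  set g : Polynomial (ZMod (2 ^ 3)) := f.map σ with hg
  have hgm : g.Monic := hf.1.map σ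
  haveI : Nontrivial (ZMod (2 ^ 3)) := ⟨0, 1, by decide⟩
  set t := AdjoinRoot.root g with htdef
  obtain ⟨u, hu⟩ := hf.2 1 (by omega)
  obtain ⟨w, hw⟩ := hf.2 0 (by omega)
  have hBu : σ (f.coeff 1) = 2 * σ u := by rw [hu, map_mul, map_ofNat]
  have hCw : σ (f.coeff 0) = 2 * σ w := by rw [hw, map_mul, map_ofNat]
  have hgeq : g = Polynomial.X ^ 2 + Polynomial.C (σ (f.coeff 1)) * Polynomial.X
      + Polynomial.C (σ (f.coeff 0)) := by
    rw [hg]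
    conv_lhs => rw [monic_deg2 hf.1 hd]
    simp [Polynomial.map_add, Polynomial.map_mul, Polynomial.map_pow]
  have hrel : t ^ 2 + AdjoinRoot.of g (σ (f.coeff 1)) * t + AdjoinRoot.of g (σ (f.coeff 0)) = 0 := by
    have h0 : AdjoinRoot.mk g (Polynomial.X ^ 2 + Polynomial.C (σ (f.coeff 1)) * Polynomial.X
        + Polynomial.C (σ (f.coeff 0))) = 0 := by
      rw [← hgeq]; exact AdjoinRoot.mk_self
    rwa [map_add, map_add, map_mul, map_pow, AdjoinRoot.mk_X, AdjoinRoot.mk_C,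
      AdjoinRoot.mk_C] at h0
  have hrel' : t ^ 2 + AdjoinRoot.of g (2 * σ u) * t + AdjoinRoot.of g (2 * σ w) = 0 := by
    rw [← hBu, ← hCw]; exact hrel
  have hr : t ^ (5 + 1) = 0 := by
    have h8 : (8 : AdjoinRoot g) = 0 := by
      have h1 : (8 : AdjoinRoot g) = AdjoinRoot.of g 8 := (map_ofNat _ 8).symm
      rw [h1, show (8 : ZMod (2 ^ 3)) = 0 by decide, map_zero]
    have ht2 : t ^ 2 = -(AdjoinRoot.of g (2 * σ u) * t + AdjoinRoot.of g (2 * σ w)) := by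
      linear_combination hrel'
    have expand : t ^ (5 + 1) = (t ^ 2) ^ 3 := by ring
    rw [expand, ht2]
    have h2 : (-(AdjoinRoot.of g (2 * σ u) * t + AdjoinRoot.of g (2 * σ w))) ^ 3
        = -(8 : AdjoinRoot g)
            * (AdjoinRoot.of g (σ u) * t + AdjoinRoot.of g (σ w)) ^ 3 := by
      rw [map_mul, map_mul, map_ofNat]
      ring
    rw [h2, h8]
    ring
  have hφf : φA 3 g hr (f : PowerSeries ℤ_[2]) = 0 := by
    rw [φA_coe, ← hg]
    exact AdjoinRoot.mk_self
  set U := σ u with hU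
  set W := σ w with hW
  set γ0 : ZMod (2 ^ 3) := (2*U)*(2*U) - (2*W) - 4*(2*U) + 6 with hγ0
  set β0 : ZMod (2 ^ 3) := (2*U)*(2*W) - 4*(2*W) + 4 with hβ0
  have hz : φA 3 g hr nu = AdjoinRoot.of g γ0 * t + AdjoinRoot.of g β0 := by
    rw [φA_nu]
    have hofγ : AdjoinRoot.of g γ0
        = (2 * AdjoinRoot.of g U) * (2 * AdjoinRoot.of g U) - 2 * AdjoinRoot.of g W
          - 4 * (2 * AdjoinRoot.of g U) + 6 := by
      rw [hγ0]
      simp only [map_add, map_sub, map_mul, map_ofNat]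
    have hofβ : AdjoinRoot.of g β0
        = (2 * AdjoinRoot.of g U) * (2 * AdjoinRoot.of g W) - 4 * (2 * AdjoinRoot.of g W) + 4 := by
      rw [hβ0]
      simp only [map_add, map_sub, map_mul, map_ofNat]
    have hrel'' : t ^ 2 + 2 * AdjoinRoot.of g U * t + 2 * AdjoinRoot.of g W = 0 := by
      have e1 : AdjoinRoot.of g (2 * σ u) = 2 * AdjoinRoot.of g U := by
        rw [map_mul, map_ofNat, hU]
      have e2 : AdjoinRoot.of g (2 * σ w) = 2 * AdjoinRoot.of g W := by
        rw [map_mul, map_ofNat, hW]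
      rw [← e1, ← e2]; exact hrel'
    rw [hofγ, hofβ]
    linear_combination (t - 2 * AdjoinRoot.of g U + 4) * hrel''
  have hrep : ∀ y : AdjoinRoot g, ∃ q : ZMod (2 ^ 3) × ZMod (2 ^ 3),
      y = AdjoinRoot.of g q.1 + AdjoinRoot.of g q.2 * t := by
    intro y
    obtain ⟨P, rfl⟩ := AdjoinRoot.mk_surjective y
    have hmod : AdjoinRoot.mk g P = AdjoinRoot.mk g (P %ₘ g) := by
      conv_lhs => rw [← Polynomial.modByMonic_add_div P g]
      rw [map_add, map_mul, AdjoinRoot.mk_self, zero_mul, add_zero]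
    have hdegg : g.degree = 2 := by
      have h1 : g.natDegree = 2 := by rw [hg, Polynomial.Monic.natDegree_map hf.1, hd]
      rw [Polynomial.degree_eq_natDegree hgm.ne_zero, h1]
      rfl
    have hdegQ : (P %ₘ g).degree ≤ 1 := by
      have h2 := Polynomial.degree_modByMonic_lt P hgm
      rw [hdegg] at h2
      exact Order.le_of_lt_succ (by exact_mod_cast h2)
    have hQ := Polynomial.eq_X_add_C_of_degree_le_one hdegQ
    refine ⟨((P %ₘ g).coeff 0, (P %ₘ g).coeff 1), ?_⟩
    rw [hmod]
    conv_lhs => rw [hQ]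
    rw [map_add, map_mul, AdjoinRoot.mk_C, AdjoinRoot.mk_C, AdjoinRoot.mk_X]
    ring
  set z := φA 3 g hr nu with hzdef
  set Mfun : ZMod (2 ^ 3) × ZMod (2 ^ 3) → ZMod (2 ^ 3) × ZMod (2 ^ 3) := fun q =>
    (q.1 * β0 - q.2 * (2*W) * γ0, q.1 * γ0 + q.2 * (β0 - (2*U) * γ0)) with hMfun
  have hsub : ((Ideal.span {z} : Ideal (AdjoinRoot g)) : Set (AdjoinRoot g))
      ⊆ (fun q : ZMod (2 ^ 3) × ZMod (2 ^ 3) => AdjoinRoot.of g q.1 + AdjoinRoot.of g q.2 * t)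
        '' (Mfun '' Set.univ) := by
    intro x hx
    obtain ⟨y, hy⟩ := Ideal.mem_span_singleton'.1 hx
    obtain ⟨q, hq⟩ := hrep y
    refine ⟨Mfun q, ⟨q, Set.mem_univ q, rfl⟩, ?_⟩
    rw [← hy, hq, hz]
    show AdjoinRoot.of g (q.1 * β0 - q.2 * (2*W) * γ0)
        + AdjoinRoot.of g (q.1 * γ0 + q.2 * (β0 - (2*U) * γ0)) * t = _
    have hrel'' : t ^ 2 + 2 * AdjoinRoot.of g U * t + 2 * AdjoinRoot.of g W = 0 := by
      have e1 : AdjoinRoot.of g (2 * σ u) = 2 * AdjoinRoot.of g U := by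
        rw [map_mul, map_ofNat, hU]
      have e2 : AdjoinRoot.of g (2 * σ w) = 2 * AdjoinRoot.of g W := by
        rw [map_mul, map_ofNat, hW]
      rw [← e1, ← e2]; exact hrel'
    simp only [map_add, map_sub, map_mul, map_ofNat]
    linear_combination (- AdjoinRoot.of g q.2 * AdjoinRoot.of g γ0) * hrel''
  obtain ⟨hcardA, hfin⟩ := card_adjoinRoot 3 g hgm
  haveI := hfin
  have hspan : Ideal.span {φA 3 g hr (f : PowerSeries ℤ_[2]), z} = Ideal.span {z} := by
    rw [hφf]
    exact Submodule.span_insert_zero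
  have hIcard : Nat.card (Ideal.span {z} : Ideal (AdjoinRoot g)) ≤ 4 := by
    have h1 : Nat.card ((Ideal.span {z} : Ideal (AdjoinRoot g)) : Set (AdjoinRoot g))
        ≤ Nat.card ((fun q : ZMod (2 ^ 3) × ZMod (2 ^ 3) =>
            AdjoinRoot.of g q.1 + AdjoinRoot.of g q.2 * t) '' (Mfun '' Set.univ)) :=
      Nat.card_mono (Set.toFinite _) hsub
    have h2 : Nat.card ((fun q : ZMod (2 ^ 3) × ZMod (2 ^ 3) =>
        AdjoinRoot.of g q.1 + AdjoinRoot.of g q.2 * t) '' (Mfun '' Set.univ))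
        ≤ Nat.card (Mfun '' Set.univ) := Nat.card_image_le (Set.toFinite _)
    have h3 : Nat.card (Mfun '' Set.univ) ≤ 4 := by
      rw [← Finset.coe_univ, ← Finset.coe_image, Nat.card_coe_set_eq, Set.ncard_coe_finset]
      simp only [hMfun, hγ0, hβ0]
      exact M_image_card U W
    exact le_trans h1 (le_trans h2 h3)
  have h16 : 16 ≤ Nat.card (AdjoinRoot g ⧸ Ideal.span {z}) := by
    apply card_quotient_ge _ hIcard
    have hdeg : g.natDegree = 2 := by rw [hg, Polynomial.Monic.natDegree_map hf.1, hd]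
    rw [hdeg] at hcardA
    rw [hcardA]
    norm_num
  refine ⟨_, inferInstance, φA 3 g hr, φA_surj 3 g hr, ?_⟩
  rw [hspan]
  exact card_bound h16

end NuProof
namespace NuProof

open Polynomial PowerSeries DirectSum

def kfun (d : ℕ) : ℕ := if d = 0 then 0 else if d = 1 then 2 else if d = 2 then 4 else 3

theorem comp {f : Polynomial ℤ_[2]} (hf : IsDistinguished2 f) :
    ∃ (A : Type) (_ : CommRing A) (φ : PowerSeries ℤ_[2] →+* A),
      Function.Surjective φ ∧
      ((2 ^ kfun f.natDegree : ℕ) : Cardinal) ≤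
        Cardinal.mk (A ⧸ Ideal.span {φ (f : PowerSeries ℤ_[2]), φ nu}) := by
  by_cases h0 : f.natDegree = 0
  · refine ⟨PowerSeries ℤ_[2] ⧸ (⊤ : Ideal (PowerSeries ℤ_[2])), inferInstance,
      Ideal.Quotient.mk ⊤, Ideal.Quotient.mk_surjective, ?_⟩
    have h1 : ((2 ^ kfun f.natDegree : ℕ) : Cardinal) = 1 := by
      rw [h0]; simp [kfun]
    rw [h1]
    exact Cardinal.one_le_iff_ne_zero.2 (Cardinal.mk_ne_zero _)
  · by_cases h1 : f.natDegree = 1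
    · have hk : kfun f.natDegree = 2 := by rw [h1]; decide
      rw [hk]
      exact comp_deg1 hf h1
    · by_cases h2 : f.natDegree = 2
      · have hk : kfun f.natDegree = 4 := by rw [h2]; decide
        rw [hk]
        exact comp_deg2 hf h2
      · have h3 : 3 ≤ f.natDegree := by omega
        have h := comp_deg3 hf h3
        have hk : kfun f.natDegree = 3 := by simp [kfun, h0, h1, h2]
        rw [hk]
        exact h

theorem kfun_ge_min (n : ℕ) : min n 3 ≤ kfun n := by
  unfold kfun
  split_ifs <;> omega

theorem kfun_two_mul {n : ℕ} (h : n ≤ 2) : kfun n = 2 * n := by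
  unfold kfun
  split_ifs <;> omega

theorem min3_sum_le {ι : Type*} (s : Finset ι) (d : ι → ℕ) :
    min (∑ j ∈ s, d j) 3 ≤ ∑ j ∈ s, min (d j) 3 := by
  induction s using Finset.cons_induction with
  | empty => simp
  | cons a s ha ih =>
    rw [Finset.sum_cons, Finset.sum_cons]
    omega

set_option maxHeartbeats 1000000 in
theorem main_bound (ι : Type*) [Fintype ι] [DecidableEq ι]
    (f : ι → Polynomial ℤ_[2]) (hf : ∀ j, IsDistinguished2 (f j)) (K : ℕ)
    (hK : K ≤ ∑ j, kfun (f j).natDegree) :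
    ((2 ^ K : ℕ) : Cardinal) ≤
      Cardinal.mk
        ((⨁ j, (PowerSeries ℤ_[2] ⧸
            Ideal.span {((f j : Polynomial ℤ_[2]) : PowerSeries ℤ_[2])})) ⧸
          (Ideal.span {nu} •
            (⊤ : Submodule (PowerSeries ℤ_[2])
              (⨁ j, (PowerSeries ℤ_[2] ⧸
                Ideal.span {((f j : Polynomial ℤ_[2]) : PowerSeries ℤ_[2])}))))) := by
  classical
  choose A instA φ hsurj hbd using fun j => comp (hf j)
  letI : ∀ j, CommRing (A j) := instA
  set M : ι → Type := fun j =>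
    PowerSeries ℤ_[2] ⧸ Ideal.span {((f j : Polynomial ℤ_[2]) : PowerSeries ℤ_[2])} with hM
  set B : ι → Type := fun j =>
    A j ⧸ Ideal.span {φ j ((f j : Polynomial ℤ_[2]) : PowerSeries ℤ_[2]), φ j nu} with hB
  -- component maps
  have hψ0 : ∀ j, ∀ a ∈ Ideal.span {((f j : Polynomial ℤ_[2]) : PowerSeries ℤ_[2])},
      (Ideal.Quotient.mk (Ideal.span {φ j ((f j : Polynomial ℤ_[2]) : PowerSeries ℤ_[2]), φ j nu})).comp (φ j) a = 0 := by
    intro j a ha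
    obtain ⟨b, hb⟩ := Ideal.mem_span_singleton'.1 ha
    rw [RingHom.comp_apply, ← hb, map_mul]
    have hmem : φ j ((f j : Polynomial ℤ_[2]) : PowerSeries ℤ_[2])
        ∈ Ideal.span {φ j ((f j : Polynomial ℤ_[2]) : PowerSeries ℤ_[2]), φ j nu} :=
      Ideal.subset_span (Set.mem_insert _ _)
    rw [Ideal.Quotient.eq_zero_iff_mem]
    exact Ideal.mul_mem_left _ _ hmem
  set ψ : ∀ j, M j →+* B j := fun j =>
    Ideal.Quotient.lift _ ((Ideal.Quotient.mk _).comp (φ j)) (hψ0 j) with hψ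
  have hψmk : ∀ (j) (a : PowerSeries ℤ_[2]),
      ψ j (Ideal.Quotient.mk _ a) = Ideal.Quotient.mk _ (φ j a) := by
    intro j a
    rw [hψ]
    exact Ideal.Quotient.lift_mk _ _ _
  have hψsurj : ∀ j, Function.Surjective (ψ j) := by
    intro j b
    obtain ⟨a0, rfl⟩ := Ideal.Quotient.mk_surjective b
    obtain ⟨x, rfl⟩ := hsurj j a0
    exact ⟨Ideal.Quotient.mk _ x, hψmk j x⟩
  -- the big additive map
  let Φ : (⨁ j, M j) →+ (∀ j, B j) :=
    { toFun := fun x j => ψ j (x j)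
      map_zero' := by
        funext j
        show ψ j ((0 : ⨁ j, M j) j) = 0
        rw [DirectSum.zero_apply, map_zero]
      map_add' := by
        intro x y
        funext j
        show ψ j ((x + y) j) = ψ j (x j) + ψ j (y j)
        rw [DirectSum.add_apply, map_add] }
  have hΦof : ∀ (j : ι) (m : M j), Φ (DirectSum.of M j m) = Pi.single j (ψ j m) := by
    intro j m
    funext j'
    by_cases h : j = j'
    · subst h
      rw [Pi.single_eq_same]
      show ψ j ((DirectSum.of M j m) j) = ψ j m
      rw [DirectSum.of_eq_same]
    · rw [Pi.single_eq_of_ne (Ne.symm h)]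
      show ψ j' ((DirectSum.of M j m) j') = 0
      rw [DirectSum.of_eq_of_ne _ _ _ (Ne.symm h), map_zero]
  have hΦsurj : Function.Surjective Φ := by
    intro y
    choose a ha using fun j => hψsurj j (y j)
    refine ⟨∑ j, DirectSum.of M j (a j), ?_⟩
    rw [map_sum]
    funext i
    rw [Finset.sum_apply]
    have : ∀ j, Φ (DirectSum.of M j (a j)) i = Pi.single j (ψ j (a j)) i := by
      intro j; rw [hΦof]
    rw [Finset.sum_congr rfl fun j _ => this j]
    have e : ∀ j, Pi.single j (ψ j (a j)) i = Pi.single j (y j) i := by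
      intro j; rw [ha]
    rw [Finset.sum_congr rfl fun j _ => e j]
    exact Fintype.sum_pi_single i y
  -- kernel property
  have hker : ∀ x ∈ (Ideal.span {nu} •
      (⊤ : Submodule (PowerSeries ℤ_[2]) (⨁ j, M j))), Φ x = 0 := by
    intro x hx
    refine Submodule.smul_induction_on hx ?_ ?_
    · intro r hr m _
      obtain ⟨c, hc⟩ := Ideal.mem_span_singleton'.1 hr
      funext j
      show ψ j ((r • m) j) = 0
      rw [DFinsupp.smul_apply]
      obtain ⟨a, ha⟩ := Ideal.Quotient.mk_surjective (m j)
      rw [← ha, ← Ideal.Quotient.mk_eq_mk, ← Submodule.Quotient.mk_smul,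
        Ideal.Quotient.mk_eq_mk]
      have hsm : r • a = c * a * nu := by rw [← hc, smul_eq_mul]; ring
      rw [hψmk, hsm, map_mul, map_mul]
      have hz0 : (Ideal.Quotient.mk (Ideal.span {φ j ((f j : Polynomial ℤ_[2]) : PowerSeries ℤ_[2]), φ j nu})) (φ j nu) = 0 :=
        Ideal.Quotient.eq_zero_iff_mem.2 (Ideal.subset_span (Set.mem_insert_of_mem _ rfl))
      rw [hz0, mul_zero]
    · intro x y hx hy
      rw [map_add, hx, hy, add_zero]
  -- descend to the quotient
  let F : ((⨁ j, M j) ⧸ (Ideal.span {nu} •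
      (⊤ : Submodule (PowerSeries ℤ_[2]) (⨁ j, M j)))) → ∀ j, B j :=
    fun q => Quotient.liftOn' q Φ (by
      intro x y hxy
      have hdiff : x - y ∈ (Ideal.span {nu} •
          (⊤ : Submodule (PowerSeries ℤ_[2]) (⨁ j, M j))) :=
        (Submodule.quotientRel_def _).1 hxy
      have h0 : Φ (x - y) = 0 := hker _ hdiff
      rw [map_sub] at h0
      exact sub_eq_zero.1 h0)
  have hFsurj : Function.Surjective F := by
    intro y
    obtain ⟨x, hx⟩ := hΦsurj y
    refine ⟨Submodule.Quotient.mk x, ?_⟩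
    show Quotient.liftOn' _ Φ _ = y
    rw [← Submodule.Quotient.mk''_eq_mk, Quotient.liftOn'_mk'']
    exact hx
  have hchain : Cardinal.mk (∀ j, B j) ≤ Cardinal.mk ((⨁ j, M j) ⧸ (Ideal.span {nu} •
      (⊤ : Submodule (PowerSeries ℤ_[2]) (⨁ j, M j)))) :=
    Cardinal.mk_le_of_surjective hFsurj
  -- lower bound for the product
  have h1 : Cardinal.mk (∀ j, B j) = Cardinal.prod (fun j => Cardinal.mk (B j)) :=
    Cardinal.mk_pi _
  have h2 : Cardinal.prod (fun j => ((2 ^ kfun (f j).natDegree : ℕ) : Cardinal))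
      ≤ Cardinal.prod (fun j => Cardinal.mk (B j)) :=
    Cardinal.prod_le_prod _ _ hbd
  have h3 : Cardinal.prod (fun j => ((2 ^ kfun (f j).natDegree : ℕ) : Cardinal))
      = ((∏ j, 2 ^ kfun (f j).natDegree : ℕ) : Cardinal) := by
    have e1 : (fun j => ((2 ^ kfun (f j).natDegree : ℕ) : Cardinal))
        = fun j => Cardinal.mk (Fin (2 ^ kfun (f j).natDegree)) := by
      funext j
      rw [Cardinal.mk_fin]
    rw [e1, ← Cardinal.mk_pi, Cardinal.mk_fintype, Fintype.card_pi]
    simp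
  have h4 : ((2 ^ K : ℕ) : Cardinal) ≤ ((∏ j, 2 ^ kfun (f j).natDegree : ℕ) : Cardinal) := by
    rw [Finset.prod_pow_eq_pow_sum]
    exact_mod_cast Nat.pow_le_pow_right (by norm_num) hK
  calc ((2 ^ K : ℕ) : Cardinal)
      ≤ ((∏ j, 2 ^ kfun (f j).natDegree : ℕ) : Cardinal) := h4
    _ = Cardinal.prod (fun j => ((2 ^ kfun (f j).natDegree : ℕ) : Cardinal)) := h3.symm
    _ ≤ Cardinal.prod (fun j => Cardinal.mk (B j)) := h2
    _ = Cardinal.mk (∀ j, B j) := h1.symm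
    _ ≤ _ := hchain

end NuProof
end


/-- For an elementary `Λ = ℤ₂[[T]]`-module `E = ⊕ Λ/(f_j)` with each `f_j`
distinguished and `λ = Σ deg f_j`, the quotient `E/ν₂E`
(where `ν₂ = ((1+T)⁴ - 1)/T = Σ_{i<4} (1+T)^i`) has cardinality at least `16`
if `λ = 2`, and at least `8` if `λ ≥ 3`. -/
theorem card_quotient_nu_two_ge_two_adic
    (ι : Type*) [Fintype ι] [DecidableEq ι]
    (f : ι → Polynomial ℤ_[2]) (hf : ∀ j, IsDistinguished2 (f j))
    (lam : ℕ) (hlam : lam = ∑ j, (f j).natDegree) :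
    (lam = 2 →
      (16 : Cardinal) ≤
        Cardinal.mk
          ((⨁ j, (PowerSeries ℤ_[2] ⧸ Ideal.span {((f j : Polynomial ℤ_[2]) : PowerSeries ℤ_[2])})) ⧸
            (Ideal.span {(∑ i ∈ Finset.range 4, (1 + PowerSeries.X) ^ i : PowerSeries ℤ_[2])} •
              (⊤ : Submodule (PowerSeries ℤ_[2])
                (⨁ j, (PowerSeries ℤ_[2] ⧸
                  Ideal.span {((f j : Polynomial ℤ_[2]) : PowerSeries ℤ_[2])})))))) ∧
    (3 ≤ lam →
      (8 : Cardinal) ≤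
        Cardinal.mk
          ((⨁ j, (PowerSeries ℤ_[2] ⧸ Ideal.span {((f j : Polynomial ℤ_[2]) : PowerSeries ℤ_[2])})) ⧸
            (Ideal.span {(∑ i ∈ Finset.range 4, (1 + PowerSeries.X) ^ i : PowerSeries ℤ_[2])} •
              (⊤ : Submodule (PowerSeries ℤ_[2])
                (⨁ j, (PowerSeries ℤ_[2] ⧸
                  Ideal.span {((f j : Polynomial ℤ_[2]) : PowerSeries ℤ_[2])})))))) := by
  constructor
  · intro h2
    have hsum : ∑ j, (f j).natDegree = 2 := hlam.symm.trans h2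
    have hle : ∀ j, (f j).natDegree ≤ 2 := by
      intro j
      have hs : (f j).natDegree ≤ ∑ k, (f k).natDegree :=
        Finset.single_le_sum (f := fun k => (f k).natDegree)
          (fun i _ => Nat.zero_le _) (Finset.mem_univ j)
      omega
    have hK : 4 ≤ ∑ j, NuProof.kfun (f j).natDegree := by
      have hterm : ∀ j ∈ Finset.univ, 2 * (f j).natDegree = NuProof.kfun (f j).natDegree :=
        fun j _ => (NuProof.kfun_two_mul (hle j)).symm
      have hcalc : (4 : ℕ) = ∑ j, NuProof.kfun (f j).natDegree := by
        calc (4 : ℕ) = 2 * ∑ j, (f j).natDegree := by rw [hsum]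
          _ = ∑ j, 2 * (f j).natDegree := Finset.mul_sum _ _ _
          _ = ∑ j, NuProof.kfun (f j).natDegree := Finset.sum_congr rfl hterm
      omega
    have hmain := NuProof.main_bound ι f hf 4 hK
    have h16 : (16 : Cardinal) = ((2 ^ 4 : ℕ) : Cardinal) := by norm_num
    rw [h16]
    exact hmain
  · intro h3
    have hsum : 3 ≤ ∑ j, (f j).natDegree := hlam ▸ h3
    have hK : 3 ≤ ∑ j, NuProof.kfun (f j).natDegree := by
      have ha : min (∑ j, (f j).natDegree) 3 = 3 := min_eq_right hsum
      have hb := NuProof.min3_sum_le Finset.univ (fun j => (f j).natDegree)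
      have hc : ∑ j, min ((f j).natDegree) 3 ≤ ∑ j, NuProof.kfun (f j).natDegree :=
        Finset.sum_le_sum (fun j _ => NuProof.kfun_ge_min _)
      omega
    have hmain := NuProof.main_bound ι f hf 3 hK
    have h8 : (8 : Cardinal) = ((2 ^ 3 : ℕ) : Cardinal) := by norm_num
    rw [h8]
    exact hmain
end

section
/- Let Λ = ℤ₂[[T]], let f(T) = T² + aT + b with a, b ∈ 2ℤ₂, and let x, y ∈ ℤ₂ be such that bx² − axy + y² ≠ 0. Then the ideal (f(T), xT + y) of Λ has finite index 2^v in Λ, where v is the 2-adic valuation of bx² − axy + y². -/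
set_option synthInstance.maxHeartbeats 1000000
set_option maxHeartbeats 1000000

open PowerSeries

namespace IdxAux

/-- coefficients of the iterative division scheme -/
noncomputable def eAux (a b : ℤ_[2]) (F : PowerSeries ℤ_[2]) : ℕ → ℕ → ℤ_[2]
  | 0 => fun n => coeff (n + 2) F
  | (m + 1) => fun n => -(a * eAux a b F m (n + 1) + b * eAux a b F m (n + 2))

@[simp] lemma eAux_zero (a b : ℤ_[2]) (F : PowerSeries ℤ_[2]) (n : ℕ) :
    eAux a b F 0 n = coeff (n + 2) F := rfl

@[simp] lemma eAux_succ (a b : ℤ_[2]) (F : PowerSeries ℤ_[2]) (m n : ℕ) :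
    eAux a b F (m + 1) n = -(a * eAux a b F m (n + 1) + b * eAux a b F m (n + 2)) := rfl

lemma norm_le_half {z : ℤ_[2]} (h : (2 : ℤ_[2]) ∣ z) : ‖z‖ ≤ 1 / 2 := by
  obtain ⟨t, rfl⟩ := h
  calc ‖(2 : ℤ_[2]) * t‖ = ‖(2 : ℤ_[2])‖ * ‖t‖ := norm_mul _ _
    _ ≤ ‖(2 : ℤ_[2])‖ * 1 := by
        have := PadicInt.norm_le_one t
        have h2 : (0:ℝ) ≤ ‖(2 : ℤ_[2])‖ := norm_nonneg _
        nlinarith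
    _ = 1 / 2 := by
        have : ‖((2 : ℕ) : ℤ_[2])‖ = ((2 : ℕ) : ℝ)⁻¹ := PadicInt.norm_p
        simpa [one_div] using this

lemma norm_eAux_le (a b : ℤ_[2]) (ha : (2 : ℤ_[2]) ∣ a) (hb : (2 : ℤ_[2]) ∣ b)
    (F : PowerSeries ℤ_[2]) (m n : ℕ) : ‖eAux a b F m n‖ ≤ (1 / 2 : ℝ) ^ m := by
  induction m generalizing n with
  | zero => simpa using PadicInt.norm_le_one _
  | succ m ih =>
    have h1 : ‖a * eAux a b F m (n + 1)‖ ≤ (1 / 2 : ℝ) ^ (m + 1) := by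
      rw [norm_mul, pow_succ, mul_comm ((1/2:ℝ)^m)]
      exact mul_le_mul (norm_le_half ha) (ih _) (norm_nonneg _) (by norm_num)
    have h2 : ‖b * eAux a b F m (n + 2)‖ ≤ (1 / 2 : ℝ) ^ (m + 1) := by
      rw [norm_mul, pow_succ, mul_comm ((1/2:ℝ)^m)]
      exact mul_le_mul (norm_le_half hb) (ih _) (norm_nonneg _) (by norm_num)
    calc ‖eAux a b F (m + 1) n‖
        = ‖a * eAux a b F m (n + 1) + b * eAux a b F m (n + 2)‖ := by
          rw [eAux_succ, norm_neg]
      _ ≤ max ‖a * eAux a b F m (n + 1)‖ ‖b * eAux a b F m (n + 2)‖ :=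
          PadicInt.nonarchimedean _ _
      _ ≤ (1 / 2 : ℝ) ^ (m + 1) := max_le h1 h2

lemma summable_eAux (a b : ℤ_[2]) (ha : (2 : ℤ_[2]) ∣ a) (hb : (2 : ℤ_[2]) ∣ b)
    (F : PowerSeries ℤ_[2]) (n : ℕ) : Summable (fun m => eAux a b F m n) :=
  Summable.of_norm_bounded (summable_geometric_of_lt_one (by norm_num) (by norm_num))
    (fun m => norm_eAux_le a b ha hb F m n)

lemma tsum_eAux_rec (a b : ℤ_[2]) (ha : (2 : ℤ_[2]) ∣ a) (hb : (2 : ℤ_[2]) ∣ b)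
    (F : PowerSeries ℤ_[2]) (n : ℕ) :
    (∑' m, eAux a b F m n) + (a * ∑' m, eAux a b F m (n + 1)
      + b * ∑' m, eAux a b F m (n + 2)) = coeff (n + 2) F := by
  have hs1 := summable_eAux a b ha hb F (n + 1)
  have hs2 := summable_eAux a b ha hb F (n + 2)
  have h1 : a * ∑' m, eAux a b F m (n + 1) = ∑' m, a * eAux a b F m (n + 1) :=
    (hs1.tsum_mul_left a).symm
  have h2 : b * ∑' m, eAux a b F m (n + 2) = ∑' m, b * eAux a b F m (n + 2) :=
    (hs2.tsum_mul_left b).symm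
  have h3 : (∑' m, a * eAux a b F m (n + 1)) + ∑' m, b * eAux a b F m (n + 2)
      = ∑' m, (a * eAux a b F m (n + 1) + b * eAux a b F m (n + 2)) :=
    (Summable.tsum_add (hs1.mul_left a) (hs2.mul_left b)).symm
  have h4 : ∀ m, a * eAux a b F m (n + 1) + b * eAux a b F m (n + 2)
      = -eAux a b F (m + 1) n := by
    intro m; rw [eAux_succ]; ring
  have h5 : (∑' m, eAux a b F m n) = eAux a b F 0 n + ∑' m, eAux a b F (m + 1) n :=
    Summable.tsum_eq_zero_add (summable_eAux a b ha hb F n)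
  rw [h1, h2, h3]
  simp_rw [h4]
  rw [tsum_neg, h5, eAux_zero]
  ring

/-- Division with remainder by `f = X² + aX + b` with `a, b` even. -/
theorem division (a b : ℤ_[2]) (ha : (2 : ℤ_[2]) ∣ a) (hb : (2 : ℤ_[2]) ∣ b)
    (F : PowerSeries ℤ_[2]) :
    ∃ (Q : PowerSeries ℤ_[2]) (A B : ℤ_[2]),
      F = Q * (X ^ 2 + C a * X + C b) + C A + C B * X := by
  set q : ℕ → ℤ_[2] := fun n => ∑' m, eAux a b F m n with hq
  refine ⟨PowerSeries.mk q, coeff 0 F - b * q 0, coeff 1 F - (a * q 0 + b * q 1), ?_⟩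
  have cX : ∀ (φ : PowerSeries ℤ_[2]) (k : ℕ),
      coeff k (φ * X) = if 1 ≤ k then coeff (k - 1) φ else 0 := by
    intro φ k
    have := PowerSeries.coeff_mul_X_pow' φ 1 k
    simpa [pow_one] using this
  have hco : ∀ k, coeff k (PowerSeries.mk q * (X ^ 2 + C a * X + C b))
      = (if 2 ≤ k then q (k - 2) else 0) + (if 1 ≤ k then q (k - 1) * a else 0) + q k * b := by
    intro k
    rw [mul_add, mul_add, map_add, map_add, ← mul_assoc, PowerSeries.coeff_mul_X_pow',
      cX, coeff_mul_C, coeff_mul_C]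
    simp [coeff_mk]
  ext k
  rw [map_add, map_add, hco, cX]
  rcases k with _ | _ | k
  · norm_num [coeff_C, q]
    ring
  · norm_num [coeff_C, q]
    ring
  · have hrec := tsum_eAux_rec a b ha hb F k
    have e2 : k + 2 - 2 = k := rfl
    have e1 : k + 2 - 1 = k + 1 := rfl
    rw [if_pos (by omega), if_pos (by omega), if_pos (by omega), e1, e2]
    norm_num [coeff_C]
    rw [← hrec]
    show q k + (a * q (k + 1) + b * q (k + 2))
        = q k + q (k + 1) * a + q (k + 1 + 1) * b
    ring


lemma two_cast : ((2 : ℕ) : ℤ_[2]) = 2 := by norm_num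

lemma dvd_iff_toZMod {z : ℤ_[2]} : (PadicInt.toZMod z = 0) ↔ (2 : ℤ_[2]) ∣ z := by
  rw [← RingHom.mem_ker, PadicInt.ker_toZMod, PadicInt.maximalIdeal_eq_span_p,
    Ideal.mem_span_singleton, two_cast]

lemma unique_step (a b : ℤ_[2]) (ha : (2 : ℤ_[2]) ∣ a) (hb : (2 : ℤ_[2]) ∣ b)
    (Q : PowerSeries ℤ_[2]) (A B : ℤ_[2])
    (h : Q * (X ^ 2 + C a * X + C b) + C A + C B * X = 0) :
    (2 : ℤ_[2]) ∣ A ∧ (2 : ℤ_[2]) ∣ B ∧ ∀ n, (2 : ℤ_[2]) ∣ coeff n Q := by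
  set u : ℤ_[2] →+* ZMod 2 := PadicInt.toZMod with hu
  have hua : u a = 0 := dvd_iff_toZMod.2 ha
  have hub : u b = 0 := dvd_iff_toZMod.2 hb
  have hm := congrArg (PowerSeries.map u) h
  rw [map_add, map_add, map_mul, map_add, map_add, map_mul, map_mul, map_pow] at hm
  simp only [PowerSeries.map_X, PowerSeries.map_C, hua, hub, map_zero,
    zero_mul, add_zero, mul_zero] at hm
  -- hm : map u Q * X ^ 2 + C (u A) + C (u B) * X = 0
  have cX : ∀ (φ : PowerSeries (ZMod 2)) (k : ℕ),
      coeff k (φ * X) = if 1 ≤ k then coeff (k - 1) φ else 0 := by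
    intro φ k
    have := PowerSeries.coeff_mul_X_pow' φ 1 k
    simpa [pow_one] using this
  have key : ∀ k, coeff k (PowerSeries.map u Q * X ^ 2 + C (u A)
      + C (u B) * X) = 0 := by
    intro k; rw [hm, map_zero]
  have h0 := key 0
  have h1 := key 1
  rw [map_add, map_add, PowerSeries.coeff_mul_X_pow', cX] at h0 h1
  norm_num [coeff_C] at h0 h1
  refine ⟨dvd_iff_toZMod.1 h0, dvd_iff_toZMod.1 h1, fun n => ?_⟩
  have h2 := key (n + 2)
  rw [map_add, map_add, PowerSeries.coeff_mul_X_pow', cX] at h2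
  rw [if_pos (by omega), if_pos (by omega)] at h2
  norm_num [coeff_C] at h2
  exact dvd_iff_toZMod.1 h2

lemma pow_dvd_of_eq_zero (a b : ℤ_[2]) (ha : (2 : ℤ_[2]) ∣ a) (hb : (2 : ℤ_[2]) ∣ b) (k : ℕ) :
    ∀ (Q : PowerSeries ℤ_[2]) (A B : ℤ_[2]),
    Q * (X ^ 2 + C a * X + C b) + C A + C B * X = 0 →
    (2 : ℤ_[2]) ^ k ∣ A ∧ (2 : ℤ_[2]) ^ k ∣ B := by
  induction k with
  | zero => intro Q A B _; simp
  | succ k ih =>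
    intro Q A B h
    obtain ⟨hA, hB, hQ⟩ := unique_step a b ha hb Q A B h
    obtain ⟨A', rfl⟩ := hA
    obtain ⟨B', rfl⟩ := hB
    have hQ' : ∃ Q', Q = C 2 * Q' := by
      refine ⟨PowerSeries.mk (fun n => Classical.choose (hQ n)), ?_⟩
      ext n
      rw [PowerSeries.coeff_C_mul, coeff_mk]
      exact Classical.choose_spec (hQ n)
    obtain ⟨Q', rfl⟩ := hQ'
    have h2 : C (2 : ℤ_[2]) *
        (Q' * (X ^ 2 + C a * X + C b) + C A' + C B' * X) = 0 := by
      rw [← h]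
      simp only [map_mul]
      ring
    have hC2 : (C (2 : ℤ_[2])) ≠ 0 := by
      intro hc
      have := congrArg (coeff 0) hc
      simp at this
    have h3 : Q' * (X ^ 2 + C a * X + C b) + C A' + C B' * X = 0 :=
      (mul_eq_zero.1 h2).resolve_left hC2
    obtain ⟨hA', hB'⟩ := ih Q' A' B' h3
    exact ⟨by rw [pow_succ, mul_comm ((2:ℤ_[2])^k)]; exact mul_dvd_mul_left 2 hA',
           by rw [pow_succ, mul_comm ((2:ℤ_[2])^k)]; exact mul_dvd_mul_left 2 hB'⟩

lemma eq_zero_of_all_pow_dvd {z : ℤ_[2]} (h : ∀ k : ℕ, (2 : ℤ_[2]) ^ k ∣ z) : z = 0 := by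
  by_contra hz
  have hk := (PadicInt.mem_span_pow_iff_le_valuation z hz (z.valuation + 1)).1
  rw [Ideal.mem_span_singleton, two_cast] at hk
  have h2 := hk (h _)
  omega

theorem division_unique (a b : ℤ_[2]) (ha : (2 : ℤ_[2]) ∣ a) (hb : (2 : ℤ_[2]) ∣ b)
    (Q : PowerSeries ℤ_[2]) (A B : ℤ_[2])
    (h : Q * (X ^ 2 + C a * X + C b) + C A + C B * X = 0) :
    A = 0 ∧ B = 0 := by
  constructor
  · exact eq_zero_of_all_pow_dvd (fun k => (pow_dvd_of_eq_zero a b ha hb k Q A B h).1)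
  · exact eq_zero_of_all_pow_dvd (fun k => (pow_dvd_of_eq_zero a b ha hb k Q A B h).2)


section Quot

variable (a b x y : ℤ_[2])

noncomputable abbrev fQ : PowerSeries ℤ_[2] := X ^ 2 + C a * X + C b
noncomputable abbrev gQ : PowerSeries ℤ_[2] := C x * X + C y
noncomputable abbrev IQ : Ideal (PowerSeries ℤ_[2]) := Ideal.span {fQ a b, gQ x y}

lemma Xg_eq : X * gQ x y = C x * fQ a b + C (-(b * x)) + C (y - a * x) * X := by
  simp only [fQ, gQ, map_sub, map_neg, map_mul]
  ring

noncomputable local instance instModQ : Module ℤ_[2] (PowerSeries ℤ_[2] ⧸ IQ a b x y) :=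
  Algebra.toModule

noncomputable def phiQ : (ℤ_[2] × ℤ_[2]) →ₗ[ℤ_[2]] (PowerSeries ℤ_[2] ⧸ IQ a b x y) where
  toFun P := Ideal.Quotient.mk _ (C P.1 + C P.2 * X)
  map_add' P R := by
    simp only [Prod.fst_add, Prod.snd_add, map_add, add_mul]
    ring
  map_smul' z P := by
    simp only [Prod.smul_fst, Prod.smul_snd, smul_eq_mul, RingHom.id_apply]
    have h1 : (C (z * P.1) + C (z * P.2) * X)
        = C z * (C P.1 + C P.2 * X) := by
      simp only [map_mul]; ring
    rw [h1, map_mul, Algebra.smul_def]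
    congr 1

lemma phiQ_surjective (ha : (2 : ℤ_[2]) ∣ a) (hb : (2 : ℤ_[2]) ∣ b) :
    Function.Surjective (phiQ a b x y) := by
  intro qq
  obtain ⟨F, rfl⟩ := Ideal.Quotient.mk_surjective qq
  obtain ⟨Q, A, B, hF⟩ := division a b ha hb F
  refine ⟨(A, B), ?_⟩
  show Ideal.Quotient.mk _ (C A + C B * X) = _
  rw [Ideal.Quotient.eq, hF]
  have : C A + C B * X - (Q * fQ a b + C A + C B * X)
      = (-Q) * fQ a b := by ring
  rw [this]
  exact Ideal.mul_mem_left _ _ (Ideal.subset_span (Set.mem_insert _ _))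

lemma ker_phiQ (ha : (2 : ℤ_[2]) ∣ a) (hb : (2 : ℤ_[2]) ∣ b) :
    LinearMap.ker (phiQ a b x y)
      = Submodule.span ℤ_[2] {(y, x), (-(b * x), y - a * x)} := by
  apply le_antisymm
  · intro P hP
    have hmem : C P.1 + C P.2 * X ∈ IQ a b x y :=
      (Ideal.Quotient.eq_zero_iff_mem).1 hP
    rw [Ideal.mem_span_pair] at hmem
    obtain ⟨u, v, huv⟩ := hmem
    obtain ⟨Q, s, t, hv⟩ := division a b ha hb v
    have hexp : (u + Q * gQ x y + C (t * x)) * fQ a b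
        + C (s * y - t * (b * x) - P.1) + C (s * x + t * (y - a * x) - P.2) * X
        = 0 := by
      simp only [fQ, gQ, map_sub, map_mul, map_add, map_neg] at huv hv ⊢
      linear_combination huv - (C x * X + C y) * hv
    obtain ⟨hA, hB⟩ := division_unique a b ha hb _ _ _ hexp
    rw [Submodule.mem_span_pair]
    refine ⟨s, t, ?_⟩
    have h1 : P.1 = s * y - t * (b * x) := by linear_combination -hA
    have h2 : P.2 = s * x + t * (y - a * x) := by linear_combination -hB
    have hP : P = (P.1, P.2) := rfl
    rw [hP]
    show (s * y + t * -(b * x), s * x + t * (y - a * x)) = (P.1, P.2)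
    rw [Prod.mk.injEq]
    exact ⟨by linear_combination hA, by linear_combination hB⟩
  · rw [Submodule.span_le]
    rintro P (rfl | rfl)
    · show phiQ a b x y (y, x) = 0
      have : phiQ a b x y (y, x) = Ideal.Quotient.mk _ (gQ x y) := by
        show Ideal.Quotient.mk _ (C y + C x * X) = _
        rw [add_comm]
      rw [this, Ideal.Quotient.eq_zero_iff_mem]
      exact Ideal.subset_span (Set.mem_insert_of_mem _ rfl)
    · show phiQ a b x y (-(b * x), y - a * x) = 0
      have : phiQ a b x y (-(b * x), y - a * x)
          = Ideal.Quotient.mk _ (X * gQ x y - C x * fQ a b) := by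
        show Ideal.Quotient.mk _ _ = _
        rw [Xg_eq a b x y]
        congr 1
        ring
      rw [this, map_sub, map_mul, map_mul]
      have hf : Ideal.Quotient.mk (IQ a b x y) (fQ a b) = 0 :=
        (Ideal.Quotient.eq_zero_iff_mem).2 (Ideal.subset_span (Set.mem_insert _ _))
      have hg : Ideal.Quotient.mk (IQ a b x y) (gQ x y) = 0 :=
        (Ideal.Quotient.eq_zero_iff_mem).2 (Ideal.subset_span (Set.mem_insert_of_mem _ rfl))
      rw [hf, hg]
      ring

lemma card_eq_card_quot (ha : (2 : ℤ_[2]) ∣ a) (hb : (2 : ℤ_[2]) ∣ b) :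
    Nat.card (PowerSeries ℤ_[2] ⧸ IQ a b x y)
      = Nat.card ((ℤ_[2] × ℤ_[2]) ⧸
          Submodule.span ℤ_[2] {((y, x) : ℤ_[2] × ℤ_[2]), (-(b * x), y - a * x)}) := by
  have e := (phiQ a b x y).quotKerEquivOfSurjective (phiQ_surjective a b x y ha hb)
  rw [ker_phiQ a b x y ha hb] at e
  exact (Nat.card_congr e.toEquiv).symm

end Quot

section TwoByTwo

open Submodule

lemma val_mul {z w : ℤ_[2]} (hz : z ≠ 0) (hw : w ≠ 0) :
    (z * w).valuation = z.valuation + w.valuation := by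
  exact PadicInt.valuation_mul hz hw

lemma val_unit {u : ℤ_[2]} (hu : IsUnit u) : u.valuation = 0 := by
  obtain ⟨v, rfl⟩ := hu
  have h1 : ((v : ℤ_[2]) * ((v⁻¹ : Units ℤ_[2]) : ℤ_[2])).valuation = 0 := by
    rw [← Units.val_mul, mul_inv_cancel, Units.val_one]
    exact PadicInt.valuation_one
  rw [val_mul (Units.ne_zero v) (Units.ne_zero v⁻¹)] at h1
  have h2 := Nat.zero_le ((v : ℤ_[2]).valuation)
  have h3 := Nat.zero_le (((v⁻¹ : Units ℤ_[2]) : ℤ_[2]).valuation)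
  omega

lemma isUnit_of_not_two_dvd {z : ℤ_[2]} (h : ¬ (2 : ℤ_[2]) ∣ z) : IsUnit z := by
  by_contra hz
  apply h
  have hmem : z ∈ IsLocalRing.maximalIdeal ℤ_[2] :=
    (IsLocalRing.mem_maximalIdeal z).2 (mem_nonunits_iff.2 hz)
  rw [PadicInt.maximalIdeal_eq_span_p, Ideal.mem_span_singleton, two_cast] at hmem
  exact hmem

lemma val_neg (z : ℤ_[2]) : (-z).valuation = z.valuation := by
  rcases eq_or_ne z 0 with rfl | hz
  · simp
  have h1 : (-z) = (-1) * z := by ring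
  rw [h1, val_mul (by norm_num) hz, val_unit (by simp : IsUnit (-1 : ℤ_[2]))]
  ring

lemma dvd_total (z w : ℤ_[2]) : z ∣ w ∨ w ∣ z := by
  rcases eq_or_ne w 0 with rfl | hw
  · exact Or.inl (dvd_zero z)
  rcases eq_or_ne z 0 with rfl | hz
  · exact Or.inr (dvd_zero w)
  suffices H : ∀ (z w : ℤ_[2]) (hz : z ≠ 0) (hw : w ≠ 0),
      z.valuation ≤ w.valuation → z ∣ w by
    rcases le_total z.valuation w.valuation with h | h
    · exact Or.inl (H z w hz hw h)
    · exact Or.inr (H w z hw hz h)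
  intro z w hz hw h
  set u := PadicInt.unitCoeff hz with hu
  set v := PadicInt.unitCoeff hw with hv
  set m := z.valuation
  set n := w.valuation
  refine ⟨((u⁻¹ * v : Units ℤ_[2]) : ℤ_[2]) * ((2 : ℕ) : ℤ_[2]) ^ (n - m), ?_⟩
  rw [PadicInt.unitCoeff_spec hw, PadicInt.unitCoeff_spec hz]
  have hpow : (((2 : ℕ)) : ℤ_[2]) ^ m * ((2 : ℕ) : ℤ_[2]) ^ (n - m)
      = ((2 : ℕ) : ℤ_[2]) ^ n := by
    rw [← pow_add]; congr 1; omega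
  have h1 : (u : ℤ_[2]) * ((u⁻¹ * v : Units ℤ_[2]) : ℤ_[2]) = (v : ℤ_[2]) := by
    rw [← Units.val_mul, mul_inv_cancel_left]
  calc (v : ℤ_[2]) * ((2 : ℕ) : ℤ_[2]) ^ n
      = ((u : ℤ_[2]) * ((u⁻¹ * v : Units ℤ_[2]) : ℤ_[2]))
        * (((2 : ℕ) : ℤ_[2]) ^ m * ((2 : ℕ) : ℤ_[2]) ^ (n - m)) := by rw [h1, hpow]
    _ = (u : ℤ_[2]) * ((2 : ℕ) : ℤ_[2]) ^ m
        * (((u⁻¹ * v : Units ℤ_[2]) : ℤ_[2]) * ((2 : ℕ) : ℤ_[2]) ^ (n - m)) := by ring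

lemma card_single {z : ℤ_[2]} (hz : z ≠ 0) :
    Nat.card (ℤ_[2] ⧸ (Ideal.span {z} : Ideal ℤ_[2])) = 2 ^ z.valuation := by
  set k := z.valuation with hk
  have hna : z.valuation = k := by
    omega
  have hassoc : (Ideal.span {z} : Ideal ℤ_[2]) = Ideal.span {((2 : ℕ) : ℤ_[2]) ^ k} := by
    rw [Ideal.span_singleton_eq_span_singleton]
    refine ⟨(PadicInt.unitCoeff hz)⁻¹, ?_⟩
    have hspec := PadicInt.unitCoeff_spec hz
    rw [hna] at hspec
    have hobs : ((PadicInt.unitCoeff hz : ℤ_[2]) * ((2 : ℕ) : ℤ_[2]) ^ k)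
        * ((PadicInt.unitCoeff hz)⁻¹ : Units ℤ_[2]) = ((2 : ℕ) : ℤ_[2]) ^ k := by
      rw [mul_comm ((PadicInt.unitCoeff hz : ℤ_[2])), mul_assoc, ← Units.val_mul,
        mul_inv_cancel, Units.val_one, mul_one]
    rw [← hspec] at hobs
    exact hobs
  have hker : RingHom.ker (PadicInt.toZModPow (p := 2) k)
      = Ideal.span {((2 : ℕ) : ℤ_[2]) ^ k} := by
    have := PadicInt.ker_toZModPow (p := 2) k
    simpa using this
  have hsur : Function.Surjective (PadicInt.toZModPow (p := 2) k) := by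
    intro c
    obtain ⟨n, rfl⟩ := ZMod.intCast_surjective c
    exact ⟨(n : ℤ_[2]), by rw [map_intCast]⟩
  have e := RingHom.quotientKerEquivOfSurjective hsur
  rw [← hker] at hassoc
  rw [hassoc, Nat.card_congr e.toEquiv, Nat.card_zmod]

lemma span_pair_prod (u v : ℤ_[2]) :
    Submodule.span ℤ_[2] {((u, 0) : ℤ_[2] × ℤ_[2]), (0, v)}
      = Submodule.prod (Ideal.span {u} : Ideal ℤ_[2]) (Ideal.span {v} : Ideal ℤ_[2]) := by
  apply le_antisymm
  · rw [Submodule.span_le]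
    rintro P hP
    simp only [Set.mem_insert_iff, Set.mem_singleton_iff] at hP
    rcases hP with rfl | rfl
    · exact Submodule.mem_prod.2 ⟨Submodule.mem_span_singleton_self u, Submodule.zero_mem _⟩
    · exact Submodule.mem_prod.2 ⟨Submodule.zero_mem _, Submodule.mem_span_singleton_self v⟩
  · rintro ⟨z1, z2⟩ hz
    obtain ⟨h1, h2⟩ := Submodule.mem_prod.1 hz
    rw [Ideal.mem_span_singleton] at h1 h2
    obtain ⟨c, rfl⟩ := h1
    obtain ⟨d, rfl⟩ := h2
    rw [Submodule.mem_span_pair]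
    refine ⟨c, d, ?_⟩
    show (c * u + d * 0, c * 0 + d * v) = (u * c, v * d)
    rw [Prod.mk.injEq]
    constructor <;> ring

lemma card_diag (u v : ℤ_[2]) (hu : u ≠ 0) (hv : v ≠ 0) :
    Nat.card ((ℤ_[2] × ℤ_[2]) ⧸ Submodule.span ℤ_[2] {((u, 0) : ℤ_[2] × ℤ_[2]), (0, v)})
      = 2 ^ (u.valuation + v.valuation) := by
  set ψ := ((Ideal.span {u} : Ideal ℤ_[2]).mkQ).prodMap ((Ideal.span {v} : Ideal ℤ_[2]).mkQ)
    with hψ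
  have hsur : Function.Surjective ψ :=
    (Submodule.mkQ_surjective _).prodMap (Submodule.mkQ_surjective _)
  have hker : LinearMap.ker ψ
      = Submodule.prod (Ideal.span {u} : Ideal ℤ_[2]) (Ideal.span {v} : Ideal ℤ_[2]) := by
    rw [hψ, LinearMap.ker_prodMap, Submodule.ker_mkQ, Submodule.ker_mkQ]
  have e := ψ.quotKerEquivOfSurjective hsur
  rw [hker] at e
  rw [span_pair_prod, Nat.card_congr e.toEquiv, Nat.card_prod, card_single hu, card_single hv,
    pow_add]

/-- shear in the second coordinate -/
noncomputable def sh1 (c : ℤ_[2]) : (ℤ_[2] × ℤ_[2]) ≃ₗ[ℤ_[2]] (ℤ_[2] × ℤ_[2]) where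
  toFun P := (P.1, P.2 + c * P.1)
  invFun P := (P.1, P.2 - c * P.1)
  map_add' P R := by
    rw [Prod.mk.injEq]
    constructor
    · rfl
    · show P.2 + R.2 + c * (P.1 + R.1) = (P.2 + c * P.1) + (R.2 + c * R.1)
      ring
  map_smul' z P := by
    rw [Prod.mk.injEq]
    constructor
    · rfl
    · show z * P.2 + c * (z * P.1) = z * (P.2 + c * P.1)
      ring
  left_inv P := by
    rw [Prod.mk.injEq]
    exact ⟨rfl, by ring⟩
  right_inv P := by
    rw [Prod.mk.injEq]
    exact ⟨rfl, by ring⟩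

/-- shear in the first coordinate -/
noncomputable def sh2 (c : ℤ_[2]) : (ℤ_[2] × ℤ_[2]) ≃ₗ[ℤ_[2]] (ℤ_[2] × ℤ_[2]) where
  toFun P := (P.1 + c * P.2, P.2)
  invFun P := (P.1 - c * P.2, P.2)
  map_add' P R := by
    rw [Prod.mk.injEq]
    constructor
    · show P.1 + R.1 + c * (P.2 + R.2) = (P.1 + c * P.2) + (R.1 + c * R.2)
      ring
    · rfl
  map_smul' z P := by
    rw [Prod.mk.injEq]
    constructor
    · show z * P.1 + c * (z * P.2) = z * (P.1 + c * P.2)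
      ring
    · rfl
  left_inv P := by
    rw [Prod.mk.injEq]
    exact ⟨by ring, rfl⟩
  right_inv P := by
    rw [Prod.mk.injEq]
    exact ⟨by ring, rfl⟩

end TwoByTwo

section Main

open Submodule

lemma card_span_pair (a b x y : ℤ_[2]) (ha : (2 : ℤ_[2]) ∣ a) (hb : (2 : ℤ_[2]) ∣ b)
    (hne : b * x ^ 2 - a * x * y + y ^ 2 ≠ 0) :
    Nat.card ((ℤ_[2] × ℤ_[2]) ⧸
        Submodule.span ℤ_[2] {((y, x) : ℤ_[2] × ℤ_[2]), (-(b * x), y - a * x)})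
      = 2 ^ (b * x ^ 2 - a * x * y + y ^ 2).valuation := by
  rcases dvd_total y x with ⟨c, rfl⟩ | ⟨c, rfl⟩
  · -- x = y * c
    have hy : y ≠ 0 := by
      rintro rfl
      apply hne
      ring
    set u : ℤ_[2] := 1 - a * c + b * c ^ 2 with hu_def
    have hu : IsUnit u := by
      apply isUnit_of_not_two_dvd
      intro hdvd
      have h1 : (2 : ℤ_[2]) ∣ (a * c - b * c ^ 2) := by
        obtain ⟨a', rfl⟩ := ha
        obtain ⟨b', rfl⟩ := hb
        exact ⟨a' * c - b' * c ^ 2, by ring⟩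
      have h2 : (2 : ℤ_[2]) ∣ 1 := by
        have := dvd_add hdvd h1
        simpa [hu_def] using this
      have hn2 := norm_le_half h2
      rw [norm_one] at hn2
      norm_num at hn2
    have huz : u ≠ 0 := hu.ne_zero
    have hN : b * (y * c) ^ 2 - a * (y * c) * y + y ^ 2 = u * (y * y) := by
      rw [hu_def]; ring
    have hspan : Submodule.span ℤ_[2]
          {((y, y * c) : ℤ_[2] × ℤ_[2]), (-(b * (y * c)), y - a * (y * c))}
        = Submodule.span ℤ_[2] {((y, y * c) : ℤ_[2] × ℤ_[2]), (0, u * y)} := by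
      apply le_antisymm <;> rw [Submodule.span_le] <;> rintro P hP <;>
        simp only [Set.mem_insert_iff, Set.mem_singleton_iff] at hP
      · rcases hP with rfl | rfl
        · exact Submodule.subset_span (Set.mem_insert _ _)
        · rw [SetLike.mem_coe, Submodule.mem_span_pair]
          refine ⟨-(b * c), 1, ?_⟩
          show (-(b * c) * y + 1 * 0, -(b * c) * (y * c) + 1 * (u * y))
              = (-(b * (y * c)), y - a * (y * c))
          rw [Prod.mk.injEq, hu_def]
          constructor <;> ring
      · rcases hP with rfl | rfl
        · exact Submodule.subset_span (Set.mem_insert _ _)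
        · rw [SetLike.mem_coe, Submodule.mem_span_pair]
          refine ⟨b * c, 1, ?_⟩
          show (b * c * y + 1 * -(b * (y * c)), b * c * (y * c) + 1 * (y - a * (y * c)))
              = (0, u * y)
          rw [Prod.mk.injEq, hu_def]
          constructor <;> ring
    have hmap : (Submodule.span ℤ_[2]
          {((y, y * c) : ℤ_[2] × ℤ_[2]), (0, u * y)}).map (sh1 (-c) : _ →ₗ[ℤ_[2]] _)
        = Submodule.span ℤ_[2] {((y, 0) : ℤ_[2] × ℤ_[2]), (0, u * y)} := by
      have himg1 : (sh1 (-c) : (ℤ_[2] × ℤ_[2]) →ₗ[ℤ_[2]] ℤ_[2] × ℤ_[2]) (y, y * c)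
          = ((y, 0) : ℤ_[2] × ℤ_[2]) := by
        show ((y, y * c + -c * y) : ℤ_[2] × ℤ_[2]) = (y, 0)
        rw [Prod.mk.injEq]
        exact ⟨rfl, by ring⟩
      have himg2 : (sh1 (-c) : (ℤ_[2] × ℤ_[2]) →ₗ[ℤ_[2]] ℤ_[2] × ℤ_[2]) (0, u * y)
          = ((0, u * y) : ℤ_[2] × ℤ_[2]) := by
        show ((0, u * y + -c * 0) : ℤ_[2] × ℤ_[2]) = (0, u * y)
        rw [Prod.mk.injEq]
        exact ⟨rfl, by ring⟩
      rw [Submodule.map_span, Set.image_pair, himg1, himg2]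
    have e := Submodule.Quotient.equiv
      (Submodule.span ℤ_[2] {((y, y * c) : ℤ_[2] × ℤ_[2]), (0, u * y)})
      (Submodule.span ℤ_[2] {((y, 0) : ℤ_[2] × ℤ_[2]), (0, u * y)}) (sh1 (-c)) hmap
    rw [hspan, Nat.card_congr e.toEquiv, card_diag y (u * y) hy (mul_ne_zero huz hy)]
    congr 1
    have h1 : (u * y).valuation = y.valuation := by
      rw [val_mul huz hy, val_unit hu]; ring
    have h2 : (b * (y * c) ^ 2 - a * (y * c) * y + y ^ 2).valuation
        = y.valuation + y.valuation := by
      rw [hN, val_mul huz (mul_ne_zero hy hy), val_mul hy hy, val_unit hu]; ring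
    have h3 := Nat.zero_le y.valuation
    omega
  · -- y = x * c
    have hx : x ≠ 0 := by
      rintro rfl
      apply hne
      ring
    set s : ℤ_[2] := b - a * c + c ^ 2 with hs_def
    have hs : s ≠ 0 := by
      intro h0
      apply hne
      have : b * x ^ 2 - a * x * (x * c) + (x * c) ^ 2 = s * (x * x) := by
        rw [hs_def]; ring
      rw [this, h0, zero_mul]
    have hN : b * x ^ 2 - a * x * (x * c) + (x * c) ^ 2 = s * (x * x) := by
      rw [hs_def]; ring
    have hspan : Submodule.span ℤ_[2]
          {((x * c, x) : ℤ_[2] × ℤ_[2]), (-(b * x), x * c - a * x)}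
        = Submodule.span ℤ_[2] {((x * c, x) : ℤ_[2] × ℤ_[2]), (-(s * x), 0)} := by
      apply le_antisymm <;> rw [Submodule.span_le] <;> rintro P hP <;>
        simp only [Set.mem_insert_iff, Set.mem_singleton_iff] at hP
      · rcases hP with rfl | rfl
        · exact Submodule.subset_span (Set.mem_insert _ _)
        · rw [SetLike.mem_coe, Submodule.mem_span_pair]
          refine ⟨c - a, 1, ?_⟩
          show (((c - a) * (x * c) + 1 * -(s * x), (c - a) * x + 1 * 0) : ℤ_[2] × ℤ_[2])
              = (-(b * x), x * c - a * x)
          rw [Prod.mk.injEq, hs_def]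
          constructor <;> ring
      · rcases hP with rfl | rfl
        · exact Submodule.subset_span (Set.mem_insert _ _)
        · rw [SetLike.mem_coe, Submodule.mem_span_pair]
          refine ⟨a - c, 1, ?_⟩
          show (((a - c) * (x * c) + 1 * -(b * x), (a - c) * x + 1 * (x * c - a * x))
              : ℤ_[2] × ℤ_[2]) = (-(s * x), 0)
          rw [Prod.mk.injEq, hs_def]
          constructor <;> ring
    have hmap : (Submodule.span ℤ_[2]
          {((x * c, x) : ℤ_[2] × ℤ_[2]), (-(s * x), 0)}).map (sh2 (-c) : _ →ₗ[ℤ_[2]] _)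
        = Submodule.span ℤ_[2] {((-(s * x), 0) : ℤ_[2] × ℤ_[2]), (0, x)} := by
      have himg1 : (sh2 (-c) : (ℤ_[2] × ℤ_[2]) →ₗ[ℤ_[2]] ℤ_[2] × ℤ_[2]) (x * c, x)
          = ((0, x) : ℤ_[2] × ℤ_[2]) := by
        show ((x * c + -c * x, x) : ℤ_[2] × ℤ_[2]) = (0, x)
        rw [Prod.mk.injEq]
        exact ⟨by ring, rfl⟩
      have himg2 : (sh2 (-c) : (ℤ_[2] × ℤ_[2]) →ₗ[ℤ_[2]] ℤ_[2] × ℤ_[2]) (-(s * x), 0)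
          = ((-(s * x), 0) : ℤ_[2] × ℤ_[2]) := by
        show ((-(s * x) + -c * 0, (0 : ℤ_[2])) : ℤ_[2] × ℤ_[2]) = (-(s * x), 0)
        rw [Prod.mk.injEq]
        exact ⟨by ring, rfl⟩
      rw [Submodule.map_span, Set.image_pair, himg1, himg2, Set.pair_comm]
    have e := Submodule.Quotient.equiv
      (Submodule.span ℤ_[2] {((x * c, x) : ℤ_[2] × ℤ_[2]), (-(s * x), 0)})
      (Submodule.span ℤ_[2] {((-(s * x), 0) : ℤ_[2] × ℤ_[2]), (0, x)}) (sh2 (-c)) hmap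
    rw [hspan, Nat.card_congr e.toEquiv,
      card_diag (-(s * x)) x (neg_ne_zero.2 (mul_ne_zero hs hx)) hx]
    congr 1
    have h1 : (-(s * x)).valuation = s.valuation + x.valuation := by
      rw [val_neg, val_mul hs hx]
    have h2 : (b * x ^ 2 - a * x * (x * c) + (x * c) ^ 2).valuation
        = s.valuation + (x.valuation + x.valuation) := by
      rw [hN, val_mul hs (mul_ne_zero hx hx), val_mul hx hx]
    have h3 := Nat.zero_le x.valuation
    have h4 := Nat.zero_le s.valuation
    omega

end Main

end IdxAux

/-- For `f(T) = T² + aT + b` with `a, b ∈ 2ℤ₂`, the ideal `(f(T), xT + y)` of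
`Λ = ℤ₂[[T]]` has finite index `2^v` in `Λ`, where `v = v₂(bx² - axy + y²)`. -/
theorem index_quadratic_linear_ideal (a b x y : ℤ_[2])
    (ha : (2 : ℤ_[2]) ∣ a) (hb : (2 : ℤ_[2]) ∣ b)
    (hne : b * x ^ 2 - a * x * y + y ^ 2 ≠ 0) :
    Nat.card (PowerSeries ℤ_[2] ⧸
      (Ideal.span
        {(PowerSeries.X ^ 2 + PowerSeries.C a * PowerSeries.X +
            PowerSeries.C b : PowerSeries ℤ_[2]),
         (PowerSeries.C x * PowerSeries.X +
            PowerSeries.C y : PowerSeries ℤ_[2])} : Ideal (PowerSeries ℤ_[2]))) =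
    2 ^ (b * x ^ 2 - a * x * y + y ^ 2).valuation := by
  have h1 := IdxAux.card_eq_card_quot a b x y ha hb
  have h2 := IdxAux.card_span_pair a b x y ha hb hne
  exact h1.trans h2
end

section
/- Let p be a prime, Λ = ℤ_p[[T]], and let M be a finitely generated Λ-module. Then: (i) M/ν₁M = 0 if and only if M = 0; (ii) for every n ≥ 0, if M/ν_{n+1}M is finite then M/ν_nM is finite and #(M/ν_nM) ≤ #(M/ν_{n+1}M); and (iii) if for some n the quotients M/ν_nM and M/ν_{n+1}M are finite of equal order, then ν_nM = 0. -/
/-- `ν_n = ((1+T)^(p^n) - 1)/T = Σ_{i < p^n} (1+T)^i` in `Λ = ℤ_p[[T]]`. -/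
noncomputable def nuPS (p : ℕ) [Fact p.Prime] (n : ℕ) : PowerSeries ℤ_[p] :=
  ∑ i ∈ Finset.range (p ^ n), (1 + PowerSeries.X) ^ i

noncomputable def phiPS (p : ℕ) [Fact p.Prime] (n : ℕ) : PowerSeries ℤ_[p] :=
  ∑ i ∈ Finset.range p, ((1 + PowerSeries.X : PowerSeries ℤ_[p]) ^ (p ^ n)) ^ i

lemma nuPS_succ (p : ℕ) [Fact p.Prime] (n : ℕ) :
    nuPS p (n + 1) = nuPS p n * phiPS p n := by
  have hX : ((1 + PowerSeries.X : PowerSeries ℤ_[p]) - 1) ≠ 0 := by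
    simp [PowerSeries.X_ne_zero (R := ℤ_[p])]
  apply mul_right_cancel₀ hX
  rw [nuPS, nuPS, phiPS, geom_sum_mul, mul_right_comm, geom_sum_mul, mul_comm, geom_sum_mul,
    ← pow_mul, pow_succ]

lemma not_isUnit_nuPS (p : ℕ) [Fact p.Prime] (n : ℕ) (hn : 1 ≤ n) :
    ¬ IsUnit (nuPS p n) := by
  rw [PowerSeries.isUnit_iff_constantCoeff, nuPS, map_sum]
  simp only [map_pow, map_add, PowerSeries.constantCoeff_one, PowerSeries.constantCoeff_X,
    add_zero, one_pow, Finset.sum_const, Finset.card_range, nsmul_eq_mul, mul_one]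
  push_cast
  rw [isUnit_pow_iff (by omega)]
  exact PadicInt.p_nonunit

lemma not_isUnit_phiPS (p : ℕ) [Fact p.Prime] (n : ℕ) :
    ¬ IsUnit (phiPS p n) := by
  rw [PowerSeries.isUnit_iff_constantCoeff, phiPS, map_sum]
  simp only [map_pow, map_add, PowerSeries.constantCoeff_one, PowerSeries.constantCoeff_X,
    add_zero, one_pow, Finset.sum_const, Finset.card_range, nsmul_eq_mul, mul_one]
  exact PadicInt.p_nonunit

/-- For a finitely generated `Λ = ℤ_p[[T]]`-module `M`:
(i) `M/ν₁M = 0` iff `M = 0`;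
(ii) if `M/ν_{n+1}M` is finite then `M/ν_nM` is finite with
`#(M/ν_nM) ≤ #(M/ν_{n+1}M)`;
(iii) if `M/ν_nM` and `M/ν_{n+1}M` are finite of equal order, then `ν_nM = 0`. -/
theorem nu_quotient_lemma (p : ℕ) [Fact p.Prime]
    (M : Type*) [AddCommGroup M] [Module (PowerSeries ℤ_[p]) M]
    [Module.Finite (PowerSeries ℤ_[p]) M] :
    (Subsingleton (M ⧸ (Ideal.span {nuPS p 1} • (⊤ : Submodule (PowerSeries ℤ_[p]) M))) ↔
      Subsingleton M) ∧
    (∀ n : ℕ,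
      Finite (M ⧸ (Ideal.span {nuPS p (n + 1)} • (⊤ : Submodule (PowerSeries ℤ_[p]) M))) →
      (Finite (M ⧸ (Ideal.span {nuPS p n} • (⊤ : Submodule (PowerSeries ℤ_[p]) M))) ∧
        Nat.card (M ⧸ (Ideal.span {nuPS p n} • (⊤ : Submodule (PowerSeries ℤ_[p]) M))) ≤
        Nat.card (M ⧸ (Ideal.span {nuPS p (n + 1)} • (⊤ : Submodule (PowerSeries ℤ_[p]) M))))) ∧
    (∀ n : ℕ,
      Finite (M ⧸ (Ideal.span {nuPS p n} • (⊤ : Submodule (PowerSeries ℤ_[p]) M))) →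
      Finite (M ⧸ (Ideal.span {nuPS p (n + 1)} • (⊤ : Submodule (PowerSeries ℤ_[p]) M))) →
      Nat.card (M ⧸ (Ideal.span {nuPS p n} • (⊤ : Submodule (PowerSeries ℤ_[p]) M))) =
        Nat.card (M ⧸ (Ideal.span {nuPS p (n + 1)} • (⊤ : Submodule (PowerSeries ℤ_[p]) M))) →
      (Ideal.span {nuPS p n} • (⊤ : Submodule (PowerSeries ℤ_[p]) M)) = ⊥) := by
  set Λ := PowerSeries ℤ_[p]
  set A : ℕ → Submodule Λ M := fun n => Ideal.span {nuPS p n} • (⊤ : Submodule Λ M) with hA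
  -- Nakayama helper
  have nak : ∀ (g : Λ) (N : Submodule Λ M), ¬ IsUnit g → N.FG →
      N ≤ Ideal.span {g} • N → N = ⊥ := by
    intro g N hg hFG hle
    refine Submodule.eq_bot_of_le_smul_of_le_jacobson_bot (IsLocalRing.maximalIdeal Λ) N hFG
      (hle.trans (Submodule.smul_mono_left ?_)) (IsLocalRing.maximalIdeal_le_jacobson ⊥)
    rwa [Ideal.span_le, Set.singleton_subset_iff, SetLike.mem_coe, IsLocalRing.mem_maximalIdeal,
      mem_nonunits_iff]
  have hTopFG : (⊤ : Submodule Λ M).FG := Module.Finite.fg_top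
  have hAFG : ∀ n, (A n).FG := by
    intro n
    show (Ideal.span {nuPS p n} • (⊤ : Submodule Λ M)).FG
    rw [Submodule.smul_eq_map₂]
    exact Submodule.FG.map₂ _ (Submodule.fg_span_singleton _) hTopFG
  have hAle : ∀ n, A (n + 1) ≤ A n := fun n =>
    Submodule.smul_mono_left (Ideal.span_singleton_le_span_singleton.mpr ⟨_, nuPS_succ p n⟩)
  -- the natural surjection M⧸A(n+1) → M⧸A n
  let f : ∀ n, (M ⧸ A (n + 1)) →ₗ[Λ] (M ⧸ A n) := fun n =>
    Submodule.mapQ (A (n + 1)) (A n) LinearMap.id (hAle n)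
  have hf_surj : ∀ n, Function.Surjective (f n) := by
    intro n y
    obtain ⟨x, rfl⟩ := Submodule.Quotient.mk_surjective _ y
    exact ⟨Submodule.Quotient.mk x, by simp [f, Submodule.mapQ_apply]⟩
  refine ⟨?_, ?_, ?_⟩
  · constructor
    · intro h
      rw [Submodule.Quotient.subsingleton_iff] at h
      have hb : (⊤ : Submodule Λ M) = ⊥ :=
        nak (nuPS p 1) ⊤ (not_isUnit_nuPS p 1 le_rfl) hTopFG (by rw [h])
      refine subsingleton_of_forall_eq 0 fun x => ?_
      have : x ∈ (⊥ : Submodule Λ M) := hb ▸ Submodule.mem_top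
      simpa using this
    · intro h
      exact (Submodule.Quotient.mk_surjective _).subsingleton
  · intro n hfin
    have hf : Finite (M ⧸ A n) := Finite.of_surjective _ (hf_surj n)
    exact ⟨hf, Nat.card_le_card_of_surjective _ (hf_surj n)⟩
  · intro n hfn hfn1 hcard
    have hbij : Function.Bijective (f n) :=
      (Nat.bijective_iff_surjective_and_card (f n)).mpr ⟨hf_surj n, hcard.symm⟩
    have heq : A n = A (n + 1) := by
      refine le_antisymm (fun x hx => ?_) (hAle n)
      have h0 : f n (Submodule.Quotient.mk x) = f n 0 := by
        rw [map_zero, Submodule.mapQ_apply, LinearMap.id_apply,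
          Submodule.Quotient.mk_eq_zero]
        exact hx
      exact (Submodule.Quotient.mk_eq_zero _).mp (hbij.injective h0)
    have hsmul : A (n + 1) = Ideal.span {phiPS p n} • A n := by
      show Ideal.span {nuPS p (n + 1)} • (⊤ : Submodule Λ M) =
        Ideal.span {phiPS p n} • (Ideal.span {nuPS p n} • (⊤ : Submodule Λ M))
      rw [show nuPS p (n + 1) = phiPS p n * nuPS p n from by rw [nuPS_succ]; ring,
        ← Ideal.span_singleton_mul_span_singleton, Submodule.mul_smul]
    exact nak (phiPS p n) (A n) (not_isUnit_phiPS p n) (hAFG n) (by rw [← hsmul, ← heq])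
end
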